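/- arXiv:2202.11808 — 4 statements merged into one kernel-verified Lean document; each statement's English description precedes it below -/
import Mathlib

section
/- There is a bijection between the set of partitions of {1,…,n} into exactly m nonempty internally ordered blocks, and the set of pairs (σ, w) where σ is a permutation of {1,…,n} with exactly m cycles and w assigns to each cycle c of σ a nonnegative integer w(c) strictly less than the length of c. -/
/-- A partition of `[n]` into exactly `m` nonempty linearly ordered blocks, modeled as a
finite set of nonempty duplicate-free lists such that every element of `Fin n` lies in
exactly one list. -/
def IsOrderedPartition (n m : ℕ) (S : Finset (List (Fin n))) : Prop :=
  S.card = m ∧ (∀ l ∈ S, l ≠ [] ∧ l.Nodup) ∧ (∀ x : Fin n, ∃! l, l ∈ S ∧ x ∈ l)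

/-- The setoid on `Fin n` whose classes are the cycles (orbits) of `σ`. -/
def sameCycleSetoid {n : ℕ} (σ : Equiv.Perm (Fin n)) : Setoid (Fin n) :=
  ⟨σ.SameCycle, ⟨fun x => Equiv.Perm.SameCycle.refl σ x, fun h => h.symm,
    fun h₁ h₂ => h₁.trans h₂⟩⟩

/-- The number of cycles (orbits, including fixed points) of a permutation. -/
noncomputable def numCycles {n : ℕ} (σ : Equiv.Perm (Fin n)) : ℕ :=
  Nat.card (Quotient (sameCycleSetoid σ))

open List Finset Equiv Equiv.Perm

namespace Stmt6Aux

variable {n : ℕ}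

/-! ### Generic orbit facts -/

/-- The size of the orbit of `x` under `σ`. -/
noncomputable def per (σ : Perm (Fin n)) (x : Fin n) : ℕ := Nat.card {y // σ.SameCycle x y}

lemma per_eq_filter (σ : Perm (Fin n)) (x : Fin n) :
    per σ x = (Finset.univ.filter (σ.SameCycle x)).card := by
  rw [per, Nat.card_eq_fintype_card, Fintype.card_subtype]

lemma sameCycle_iff_eq_of_fixed {σ : Perm (Fin n)} {x : Fin n} (hx : σ x = x) {y : Fin n} :
    σ.SameCycle x y ↔ y = x := by
  constructor
  · rintro ⟨k, rfl⟩
    exact zpow_apply_eq_self_of_apply_eq_self hx k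
  · rintro rfl; exact ⟨0, by simp⟩

lemma per_of_fixed {σ : Perm (Fin n)} {x : Fin n} (hx : σ x = x) : per σ x = 1 := by
  rw [per_eq_filter]
  have h : Finset.univ.filter (σ.SameCycle x) = {x} := by
    ext y
    simp [sameCycle_iff_eq_of_fixed hx]
  rw [h, Finset.card_singleton]

lemma per_of_ne {σ : Perm (Fin n)} {x : Fin n} (hx : σ x ≠ x) :
    per σ x = (σ.cycleOf x).support.card := by
  rw [per_eq_filter]
  congr 1
  ext y
  simp [Equiv.Perm.mem_support_cycleOf_iff' hx]

lemma per_pos (σ : Perm (Fin n)) (x : Fin n) : 0 < per σ x := by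
  have : Nonempty {y // σ.SameCycle x y} := ⟨⟨x, Equiv.Perm.SameCycle.refl σ x⟩⟩
  exact Nat.card_pos

lemma per_congr {σ : Perm (Fin n)} {x y : Fin n} (h : σ.SameCycle x y) : per σ x = per σ y :=
  Nat.card_congr (Equiv.subtypeEquivRight fun z => ⟨fun hz => h.symm.trans hz,
    fun hz => h.trans hz⟩)

lemma pow_mod_per (σ : Perm (Fin n)) (x : Fin n) (t : ℕ) :
    (σ ^ (t % per σ x)) x = (σ ^ t) x := by
  by_cases hx : σ x = x
  · rw [pow_apply_eq_self_of_apply_eq_self hx, pow_apply_eq_self_of_apply_eq_self hx]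
  · rw [per_of_ne hx]
    exact Equiv.Perm.pow_mod_card_support_cycleOf_self_apply σ t x

lemma pow_per (σ : Perm (Fin n)) (x : Fin n) : (σ ^ per σ x) x = x := by
  have h := pow_mod_per σ x (per σ x)
  rw [Nat.mod_self, pow_zero, Equiv.Perm.coe_one, id_eq] at h
  exact h.symm

lemma pow_inj_of_lt_per {σ : Perm (Fin n)} {x : Fin n} {i j : ℕ} (hi : i < per σ x)
    (hj : j < per σ x) (h : (σ ^ i) x = (σ ^ j) x) : i = j := by
  by_cases hx : σ x = x
  · have h1 := per_of_fixed (σ := σ) hx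
    omega
  · rw [per_of_ne hx] at hi hj
    have h2 : (σ ^ (i : ℤ)) x = (σ ^ (j : ℤ)) x := by
      simpa [zpow_natCast] using h
    rw [Equiv.Perm.zpow_eq_zpow_on_iff σ hx] at h2
    rw [Int.emod_eq_of_lt (by positivity) (by exact_mod_cast hi),
      Int.emod_eq_of_lt (by positivity) (by exact_mod_cast hj)] at h2
    exact_mod_cast h2

lemma exists_pow_lt_per {σ : Perm (Fin n)} {x y : Fin n} (h : σ.SameCycle x y) :
    ∃ j < per σ x, (σ ^ j) x = y := by
  by_cases hx : σ x = x
  · refine ⟨0, by rw [per_of_fixed hx]; norm_num, ?_⟩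
    simp [(sameCycle_iff_eq_of_fixed hx).mp h]
  · obtain ⟨i, hi, hxy⟩ := h.exists_pow_eq_of_mem_support (Equiv.Perm.mem_support.mpr hx)
    exact ⟨i, by rwa [per_of_ne hx], hxy⟩

/-! ### List auxiliary lemmas -/

lemma indexOf_get' {l : List (Fin n)} (hl : l.Nodup) (i : Fin l.length) :
    l.idxOf (l.get i) = (i : ℕ) := by
  have h1 : l.idxOf (l.get i) < l.length := List.idxOf_lt_length_iff.mpr (l.get_mem _)
  have h2 := List.idxOf_get (a := l.get i) (l := l) h1
  have h3 := (List.Nodup.get_inj_iff hl).mp h2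
  exact congrArg Fin.val h3

lemma min'_congr {s t : Finset (Fin n)} (h : s = t) (hs : s.Nonempty) (ht : t.Nonempty) :
    s.min' hs = t.min' ht := by subst h; rfl

/-! ### Forward direction : from an ordered partition to a weighted permutation -/

section Forward

variable {m : ℕ} {S : Finset (List (Fin n))}

/-- The block containing `x`. -/
noncomputable def blk (hS : IsOrderedPartition n m S) (x : Fin n) : List (Fin n) :=
  (hS.2.2 x).exists.choose

variable (hS : IsOrderedPartition n m S)

lemma blk_mem (x : Fin n) : blk hS x ∈ S := (hS.2.2 x).exists.choose_spec.1

lemma mem_blk (x : Fin n) : x ∈ blk hS x := (hS.2.2 x).exists.choose_spec.2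

lemma eq_blk {l : List (Fin n)} {x : Fin n} (hl : l ∈ S) (hx : x ∈ l) : l = blk hS x :=
  (hS.2.2 x).unique ⟨hl, hx⟩ ⟨blk_mem hS x, mem_blk hS x⟩

lemma blk_nodup (x : Fin n) : (blk hS x).Nodup := (hS.2.1 _ (blk_mem hS x)).2

lemma blk_ne_nil (x : Fin n) : blk hS x ≠ [] := (hS.2.1 _ (blk_mem hS x)).1

lemma blk_len_pos (x : Fin n) : 0 < (blk hS x).length :=
  List.length_pos_iff.mpr (blk_ne_nil hS x)

lemma blk_of_mem {x y : Fin n} (h : y ∈ blk hS x) : blk hS y = blk hS x :=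
  (eq_blk hS (blk_mem hS x) h).symm

lemma indexOf_blk_lt (x : Fin n) : (blk hS x).idxOf x < (blk hS x).length :=
  List.idxOf_lt_length_iff.mpr (mem_blk hS x)

/-- Successor map : move one step forward (cyclically) in the block. -/
noncomputable def nextF (x : Fin n) : Fin n :=
  (blk hS x).get ⟨((blk hS x).idxOf x + 1) % (blk hS x).length,
    Nat.mod_lt _ (blk_len_pos hS x)⟩

lemma nextF_mem (x : Fin n) : nextF hS x ∈ blk hS x := List.get_mem _ _

lemma indexOf_nextF (x : Fin n) :
    (blk hS x).idxOf (nextF hS x) = ((blk hS x).idxOf x + 1) % (blk hS x).length :=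
  indexOf_get' (blk_nodup hS x) _

lemma mod_succ_inj {k i j : ℕ} (hi : i < k) (hj : j < k) (h : (i + 1) % k = (j + 1) % k) :
    i = j := by
  have h1 : (i + 1) % k = (j + 1) % k → (i + 1) ≡ (j + 1) [MOD k] := fun hh => hh
  have h2 := Nat.ModEq.add_right_cancel' 1 (h1 h)
  have h3 : i % k = j % k := h2
  rwa [Nat.mod_eq_of_lt hi, Nat.mod_eq_of_lt hj] at h3

lemma nextF_inj : Function.Injective (nextF hS) := by
  intro x y h
  have hbx : blk hS x = blk hS y := by
    rw [← blk_of_mem hS (nextF_mem hS x), h, blk_of_mem hS (nextF_mem hS y)]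
  have h1 : (blk hS x).idxOf (nextF hS x) = (blk hS x).idxOf (nextF hS y) := by rw [h]
  rw [indexOf_nextF hS x, hbx, indexOf_nextF hS y] at h1
  have hix : (blk hS y).idxOf x < (blk hS y).length := by
    rw [← hbx]; exact indexOf_blk_lt hS x
  have hiy := indexOf_blk_lt hS y
  have h2 : (blk hS y).idxOf x = (blk hS y).idxOf y := mod_succ_inj hix hiy h1
  have hxmem : x ∈ blk hS y := by rw [← hbx]; exact mem_blk hS x
  exact (List.idxOf_inj hxmem).mp h2

/-- The permutation associated to an ordered partition. -/
noncomputable def σS : Perm (Fin n) :=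
  Equiv.ofBijective _ (Finite.injective_iff_bijective.mp (nextF_inj hS))

lemma σS_apply (x : Fin n) : σS hS x = nextF hS x := rfl

lemma pow_blk (j : ℕ) (x : Fin n) :
    ((σS hS) ^ j) x ∈ blk hS x ∧
      (blk hS x).idxOf (((σS hS) ^ j) x) =
        ((blk hS x).idxOf x + j) % (blk hS x).length := by
  induction j with
  | zero =>
    refine ⟨by simpa using mem_blk hS x, ?_⟩
    simp [Nat.mod_eq_of_lt (indexOf_blk_lt hS x)]
  | succ j ih =>
    obtain ⟨hmem, hidx⟩ := ih
    have hstep : ((σS hS) ^ (j + 1)) x = nextF hS (((σS hS) ^ j) x) := by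
      rw [pow_succ', Equiv.Perm.mul_apply]; rfl
    have hb : blk hS (((σS hS) ^ j) x) = blk hS x := blk_of_mem hS hmem
    constructor
    · rw [hstep]
      have := nextF_mem hS (((σS hS) ^ j) x)
      rwa [hb] at this
    · rw [hstep]
      have h1 := indexOf_nextF hS (((σS hS) ^ j) x)
      rw [hb] at h1
      rw [h1, hidx, Nat.mod_add_mod, Nat.add_assoc]

lemma sameCycle_σS_iff {x y : Fin n} : (σS hS).SameCycle x y ↔ y ∈ blk hS x := by
  constructor
  · intro h
    obtain ⟨i, _, _, hi⟩ := Equiv.Perm.SameCycle.exists_pow_eq _ h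
    rw [← hi]
    exact (pow_blk hS i x).1
  · intro h
    set k := (blk hS x).length with hk
    have hik : (blk hS x).idxOf x < k := indexOf_blk_lt hS x
    have hjk : (blk hS x).idxOf y < k := List.idxOf_lt_length_iff.mpr h
    refine ⟨((k - (blk hS x).idxOf x) + (blk hS x).idxOf y : ℕ), ?_⟩
    rw [zpow_natCast]
    obtain ⟨hmem, hidx⟩ := pow_blk hS ((k - (blk hS x).idxOf x) + (blk hS x).idxOf y) x
    have h2 : ((blk hS x).idxOf x + ((k - (blk hS x).idxOf x) + (blk hS x).idxOf y)) % k
        = (blk hS x).idxOf y := by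
      have h3 : (blk hS x).idxOf x + ((k - (blk hS x).idxOf x) + (blk hS x).idxOf y)
          = k + (blk hS x).idxOf y := by omega
      rw [h3, Nat.add_mod_left, Nat.mod_eq_of_lt hjk]
    rw [h2] at hidx
    exact (List.idxOf_inj hmem).mp hidx

lemma per_σS (x : Fin n) : per (σS hS) x = (blk hS x).length := by
  rw [per_eq_filter]
  have h : Finset.univ.filter ((σS hS).SameCycle x) = (blk hS x).toFinset := by
    ext y
    simp [sameCycle_σS_iff hS, List.mem_toFinset]
  rw [h, List.toFinset_card_of_nodup (blk_nodup hS x)]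

/-- The minimum of the block of `x`. -/
noncomputable def mn (x : Fin n) : Fin n :=
  (blk hS x).toFinset.min' ⟨x, List.mem_toFinset.mpr (mem_blk hS x)⟩

lemma mn_mem (x : Fin n) : mn hS x ∈ blk hS x :=
  List.mem_toFinset.mp (Finset.min'_mem _ _)

/-- The weight : position of the minimum in the block. -/
noncomputable def wS (x : Fin n) : ℕ := (blk hS x).idxOf (mn hS x)

lemma wS_lt (x : Fin n) : wS hS x < (blk hS x).length :=
  List.idxOf_lt_length_iff.mpr (mn_mem hS x)

lemma mn_congr {x y : Fin n} (h : blk hS x = blk hS y) : mn hS x = mn hS y :=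
  min'_congr (by rw [h]) _ _

lemma wS_sameCycle {x y : Fin n} (h : (σS hS).SameCycle x y) : wS hS x = wS hS y := by
  have hb : blk hS y = blk hS x := blk_of_mem hS ((sameCycle_σS_iff hS).mp h)
  rw [wS, wS, hb, mn_congr hS hb.symm]

lemma wS_lt_per (x : Fin n) : wS hS x < per (σS hS) x := by
  rw [per_σS hS]; exact wS_lt hS x

lemma numCycles_σS : numCycles (σS hS) = m := by
  have resp : ∀ x y : Fin n, (sameCycleSetoid (σS hS)).r x y →
      (⟨blk hS x, blk_mem hS x⟩ : {l // l ∈ S}) = ⟨blk hS y, blk_mem hS y⟩ := by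
    intro x y hxy
    have : (σS hS).SameCycle x y := hxy
    simp only [Subtype.mk.injEq]
    exact (blk_of_mem hS ((sameCycle_σS_iff hS).mp this)).symm
  have e : Quotient (sameCycleSetoid (σS hS)) ≃ {l // l ∈ S} := by
    refine Equiv.ofBijective (Quotient.lift
      (fun x => (⟨blk hS x, blk_mem hS x⟩ : {l // l ∈ S})) resp) ⟨?_, ?_⟩
    · intro a b
      induction a using Quotient.ind with | _ x => ?_
      induction b using Quotient.ind with | _ y => ?_
      intro h
      apply Quotient.sound
      have h2 : blk hS x = blk hS y := by
        simpa using h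
      show (σS hS).SameCycle x y
      rw [sameCycle_σS_iff hS, h2]
      exact mem_blk hS y
    · rintro ⟨l, hl⟩
      obtain ⟨x, hx⟩ := List.exists_mem_of_ne_nil l (hS.2.1 l hl).1
      exact ⟨⟦x⟧, by simp [← eq_blk hS hl hx]⟩
  rw [numCycles, Nat.card_congr e, Nat.card_eq_fintype_card, Fintype.card_coe]
  exact hS.1

end Forward

/-! ### Backward direction : from a weighted permutation to an ordered partition -/

section Backward

variable (σ : Perm (Fin n)) (w : Fin n → ℕ)

/-- The minimum of the cycle of `x`. -/
noncomputable def aMin (x : Fin n) : Fin n :=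
  (Finset.univ.filter (σ.SameCycle x)).min'
    ⟨x, by simp [Equiv.Perm.SameCycle.refl]⟩

lemma aMin_sameCycle (x : Fin n) : σ.SameCycle x (aMin σ x) := by
  have h := Finset.min'_mem (Finset.univ.filter (σ.SameCycle x))
    ⟨x, by simp [Equiv.Perm.SameCycle.refl]⟩
  exact (Finset.mem_filter.mp h).2

lemma aMin_congr {x y : Fin n} (h : σ.SameCycle x y) : aMin σ x = aMin σ y := by
  apply min'_congr
  ext z
  simp only [Finset.mem_filter, Finset.mem_univ, true_and]
  exact ⟨fun hz => h.symm.trans hz, fun hz => h.trans hz⟩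

/-- The starting point of the list of the cycle of `x` : the point sitting `w x` steps
before the minimum of the cycle. -/
noncomputable def bPt (x : Fin n) : Fin n := (σ ^ (per σ x - w x)) (aMin σ x)

lemma bPt_sameCycle (x : Fin n) : σ.SameCycle x (bPt σ w x) :=
  (aMin_sameCycle σ x).trans ⟨(per σ x - w x : ℕ), by rw [zpow_natCast]; rfl⟩

lemma per_bPt (x : Fin n) : per σ (bPt σ w x) = per σ x :=
  (per_congr (bPt_sameCycle σ w x)).symm

lemma pow_w_bPt (hlt : ∀ x, w x < per σ x) (x : Fin n) :
    (σ ^ (w x)) (bPt σ w x) = aMin σ x := by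
  rw [bPt, ← Equiv.Perm.mul_apply, ← pow_add]
  have h1 : w x + (per σ x - w x) = per σ x := by
    have := hlt x; omega
  rw [h1]
  have h2 : per σ x = per σ (aMin σ x) := per_congr (aMin_sameCycle σ x)
  rw [h2]
  exact pow_per σ (aMin σ x)

/-- The ordered block of the cycle of `x`. -/
noncomputable def cycList (x : Fin n) : List (Fin n) :=
  (List.range (per σ x)).map (fun j => (σ ^ j) (bPt σ w x))

lemma cycList_length (x : Fin n) : (cycList σ w x).length = per σ x := by
  simp [cycList]

lemma cycList_get (x : Fin n) {j : ℕ} (hj : j < (cycList σ w x).length) :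
    (cycList σ w x).get ⟨j, hj⟩ = (σ ^ j) (bPt σ w x) := by
  simp [cycList]

lemma mem_cycList_iff {x y : Fin n} : y ∈ cycList σ w x ↔ σ.SameCycle x y := by
  constructor
  · intro h
    simp only [cycList, List.mem_map, List.mem_range] at h
    obtain ⟨j, _, rfl⟩ := h
    exact (bPt_sameCycle σ w x).trans ⟨(j : ℕ), by rw [zpow_natCast]⟩
  · intro h
    have h2 : σ.SameCycle (bPt σ w x) y := (bPt_sameCycle σ w x).symm.trans h
    obtain ⟨j, hj, hjy⟩ := exists_pow_lt_per h2
    rw [per_bPt σ w x] at hj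
    simp only [cycList, List.mem_map, List.mem_range]
    exact ⟨j, hj, hjy⟩

lemma cycList_nodup (x : Fin n) : (cycList σ w x).Nodup := by
  refine List.Nodup.map_on ?_ List.nodup_range
  intro i hi j hj h
  rw [List.mem_range] at hi hj
  rw [← per_bPt σ w x] at hi hj
  exact pow_inj_of_lt_per hi hj h

lemma cycList_ne_nil (x : Fin n) : cycList σ w x ≠ [] := by
  have h := cycList_length σ w x
  have h2 := per_pos σ x
  intro hc
  rw [hc] at h
  simp at h
  omega

lemma indexOf_cycList {x : Fin n} {j : ℕ} (hj : j < per σ x) :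
    (cycList σ w x).idxOf ((σ ^ j) (bPt σ w x)) = j := by
  have hj' : j < (cycList σ w x).length := by rw [cycList_length]; exact hj
  have h := cycList_get σ w x hj'
  rw [← h, indexOf_get' (cycList_nodup σ w x)]

lemma mem_cycList_self (x : Fin n) : x ∈ cycList σ w x :=
  (mem_cycList_iff σ w).mpr (Equiv.Perm.SameCycle.refl σ x)

lemma cycList_congr (hw : ∀ x y, σ.SameCycle x y → w x = w y) {x y : Fin n}
    (h : σ.SameCycle x y) : cycList σ w x = cycList σ w y := by
  have h1 : per σ x = per σ y := per_congr h
  have h2 : aMin σ x = aMin σ y := aMin_congr σ h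
  have h3 : w x = w y := hw x y h
  simp [cycList, bPt, h1, h2, h3]

lemma sameCycle_of_cycList_eq {x y : Fin n} (h : cycList σ w x = cycList σ w y) :
    σ.SameCycle x y := by
  have hx : x ∈ cycList σ w y := by rw [← h]; exact mem_cycList_self σ w x
  exact ((mem_cycList_iff σ w).mp hx).symm

/-- The ordered partition associated to a weighted permutation. -/
noncomputable def S' : Finset (List (Fin n)) :=
  Finset.image (cycList σ w) Finset.univ

lemma mem_S' {l : List (Fin n)} : l ∈ S' σ w ↔ ∃ x, cycList σ w x = l := by
  simp [S']

lemma isOP_S' {m : ℕ} (hm : numCycles σ = m) (hw : ∀ x y, σ.SameCycle x y → w x = w y) :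
    IsOrderedPartition n m (S' σ w) := by
  refine ⟨?_, ?_, ?_⟩
  · -- card
    have e : Quotient (sameCycleSetoid σ) ≃ {l // l ∈ S' σ w} := by
      have resp : ∀ x y : Fin n, (sameCycleSetoid σ).r x y →
          (⟨cycList σ w x, (mem_S' σ w).mpr ⟨x, rfl⟩⟩ : {l // l ∈ S' σ w}) =
            ⟨cycList σ w y, (mem_S' σ w).mpr ⟨y, rfl⟩⟩ := by
        intro x y hxy
        simp only [Subtype.mk.injEq]
        exact cycList_congr σ w hw hxy
      refine Equiv.ofBijective (Quotient.lift
        (fun x => (⟨cycList σ w x, (mem_S' σ w).mpr ⟨x, rfl⟩⟩ : {l // l ∈ S' σ w})) resp)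
        ⟨?_, ?_⟩
      · intro a b
        induction a using Quotient.ind with | _ x => ?_
        induction b using Quotient.ind with | _ y => ?_
        intro h
        apply Quotient.sound
        have h2 : cycList σ w x = cycList σ w y := by simpa using h
        exact sameCycle_of_cycList_eq σ w h2
      · rintro ⟨l, hl⟩
        obtain ⟨x, hx⟩ := (mem_S' σ w).mp hl
        exact ⟨⟦x⟧, by simp [hx]⟩
    have h := Nat.card_congr e
    rw [← numCycles] at h
    rw [← hm, h, Nat.card_eq_fintype_card, Fintype.card_coe]
  · -- blocks nonempty and nodup
    intro l hl
    obtain ⟨x, rfl⟩ := (mem_S' σ w).mp hl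
    exact ⟨cycList_ne_nil σ w x, cycList_nodup σ w x⟩
  · -- unique block
    intro x
    refine ⟨cycList σ w x, ⟨(mem_S' σ w).mpr ⟨x, rfl⟩, mem_cycList_self σ w x⟩, ?_⟩
    rintro l ⟨hl, hxl⟩
    obtain ⟨y, rfl⟩ := (mem_S' σ w).mp hl
    exact cycList_congr σ w hw ((mem_cycList_iff σ w).mp hxl)

end Backward

/-! ### Round trips -/

section RoundTrip1

variable {m : ℕ} {S : Finset (List (Fin n))} (hS : IsOrderedPartition n m S)

lemma filter_sameCycle_eq (x : Fin n) :
    Finset.univ.filter ((σS hS).SameCycle x) = (blk hS x).toFinset := by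
  ext y
  simp [sameCycle_σS_iff hS, List.mem_toFinset]

lemma aMin_σS (x : Fin n) : aMin (σS hS) x = mn hS x :=
  min'_congr (filter_sameCycle_eq hS x) _ _

lemma indexOf_bPt_σS (x : Fin n) :
    bPt (σS hS) (wS hS) x ∈ blk hS x ∧ (blk hS x).idxOf (bPt (σS hS) (wS hS) x) = 0 := by
  have hmnblk : blk hS (mn hS x) = blk hS x := blk_of_mem hS (mn_mem hS x)
  have hpow := pow_blk hS (per (σS hS) x - wS hS x) (mn hS x)
  rw [hmnblk] at hpow
  obtain ⟨hmem, hidx⟩ := hpow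
  have hb : bPt (σS hS) (wS hS) x = ((σS hS) ^ (per (σS hS) x - wS hS x)) (mn hS x) := by
    rw [bPt, aMin_σS hS x]
  have hw0 : (blk hS x).idxOf (mn hS x) = wS hS x := rfl
  have hwlt : wS hS x < (blk hS x).length := wS_lt hS x
  have hper : per (σS hS) x = (blk hS x).length := per_σS hS x
  constructor
  · rw [hb]; exact hmem
  · rw [hb, hidx, hw0]
    have : wS hS x + (per (σS hS) x - wS hS x) = (blk hS x).length := by omega
    rw [this, Nat.mod_self]

lemma cycList_σS (x : Fin n) : cycList (σS hS) (wS hS) x = blk hS x := by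
  obtain ⟨hbmem, hbidx⟩ := indexOf_bPt_σS hS x
  have hblkb : blk hS (bPt (σS hS) (wS hS) x) = blk hS x := blk_of_mem hS hbmem
  have hlen : (cycList (σS hS) (wS hS) x).length = (blk hS x).length := by
    rw [cycList_length, per_σS hS x]
  refine List.ext_get hlen ?_
  intro j h1 h2
  have hjlt : j < per (σS hS) x := by
    rw [cycList_length] at h1; exact h1
  rw [cycList_get _ _ _ h1]
  have hpow := pow_blk hS j (bPt (σS hS) (wS hS) x)
  rw [hblkb, hbidx] at hpow
  obtain ⟨hmem, hidx⟩ := hpow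
  rw [Nat.zero_add] at hidx
  have hjmod : j % (blk hS x).length = j := Nat.mod_eq_of_lt h2
  rw [hjmod] at hidx
  have hidx2 : (blk hS x).idxOf (((σS hS) ^ j) (bPt (σS hS) (wS hS) x)) < (blk hS x).length :=
    List.idxOf_lt_length_iff.mpr hmem
  have := List.idxOf_get (a := ((σS hS) ^ j) (bPt (σS hS) (wS hS) x)) (l := blk hS x) hidx2
  rw [← this]
  congr 1
  exact Fin.ext hidx

lemma S'_σS : S' (σS hS) (wS hS) = S := by
  ext l
  rw [mem_S']
  constructor
  · rintro ⟨x, rfl⟩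
    rw [cycList_σS hS x]
    exact blk_mem hS x
  · intro hl
    obtain ⟨x, hx⟩ := List.exists_mem_of_ne_nil l (hS.2.1 l hl).1
    exact ⟨x, by rw [cycList_σS hS x, ← eq_blk hS hl hx]⟩

end RoundTrip1

section RoundTrip2

variable (σ : Perm (Fin n)) (w : Fin n → ℕ)
variable {m : ℕ} (hm : numCycles σ = m) (hw : ∀ x y, σ.SameCycle x y → w x = w y)

lemma blk_S' (x : Fin n) :
    blk (isOP_S' σ w hm hw) x = cycList σ w x :=
  (eq_blk (isOP_S' σ w hm hw) ((mem_S' σ w).mpr ⟨x, rfl⟩) (mem_cycList_self σ w x)).symm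

lemma σS_S' : σS (isOP_S' σ w hm hw) = σ := by
  apply Equiv.ext
  intro x
  set hS₀ := isOP_S' σ w hm hw with hhS₀
  have hblk : blk hS₀ x = cycList σ w x := blk_S' σ w hm hw x
  obtain ⟨j, hj, hjx⟩ := exists_pow_lt_per ((bPt_sameCycle σ w x).symm.trans
    (Equiv.Perm.SameCycle.refl σ x))
  rw [per_bPt σ w x] at hj
  have hidxx : (blk hS₀ x).idxOf x = j := by
    rw [hblk]
    have h5 := indexOf_cycList σ w (x := x) hj
    rw [hjx] at h5
    exact h5
  have hlen : (blk hS₀ x).length = per σ x := by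
    rw [hblk, cycList_length]
  show nextF hS₀ x = σ x
  rw [nextF]
  have harg : ((blk hS₀ x).idxOf x + 1) % (blk hS₀ x).length = (j + 1) % per σ x := by
    rw [hidxx, hlen]
  have hargl : (j + 1) % per σ x < (cycList σ w x).length := by
    rw [cycList_length]
    exact Nat.mod_lt _ (per_pos σ x)
  have hget : (blk hS₀ x).get ⟨((blk hS₀ x).idxOf x + 1) % (blk hS₀ x).length,
      Nat.mod_lt _ (blk_len_pos hS₀ x)⟩ =
      (cycList σ w x).get ⟨(j + 1) % per σ x, hargl⟩ := by
    apply List.get_of_eq hblk ⟨_, _⟩ |>.trans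
    congr 1
    exact Fin.ext harg
  rw [hget, cycList_get σ w x hargl]
  have hmod : (σ ^ ((j + 1) % per σ x)) (bPt σ w x) = (σ ^ (j + 1)) (bPt σ w x) := by
    have := pow_mod_per σ (bPt σ w x) (j + 1)
    rwa [per_bPt σ w x] at this
  rw [hmod, pow_succ', Equiv.Perm.mul_apply, hjx]

lemma wS_S' (hlt : ∀ x, w x < per σ x) : wS (isOP_S' σ w hm hw) = w := by
  funext x
  set hS₀ := isOP_S' σ w hm hw with hhS₀
  have hblk : blk hS₀ x = cycList σ w x := blk_S' σ w hm hw x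
  have hmn : mn hS₀ x = aMin σ x := by
    rw [mn]
    apply min'_congr
    rw [hblk]
    ext y
    simp only [List.mem_toFinset, Finset.mem_filter, Finset.mem_univ, true_and]
    exact (mem_cycList_iff σ w)
  have haw : aMin σ x = (σ ^ (w x)) (bPt σ w x) := (pow_w_bPt σ w hlt x).symm
  rw [wS, hmn, hblk, haw, indexOf_cycList σ w (hlt x)]

end RoundTrip2

end Stmt6Aux

open Stmt6Aux in
/-- There is a bijection between partitions of `[n]` into `m` internally ordered blocks and
weighted permutations `(σ, w)` where `σ` has `m` cycles and the weight of each cycle is a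
nonnegative integer strictly smaller than the length of the cycle.  Weights on cycles are
modeled as functions `Fin n → ℕ` constant on each cycle. -/
theorem stmt6 (n m : ℕ) :
    Nonempty ({S : Finset (List (Fin n)) // IsOrderedPartition n m S} ≃
      {p : Equiv.Perm (Fin n) × (Fin n → ℕ) //
        numCycles p.1 = m ∧ (∀ x y, p.1.SameCycle x y → p.2 x = p.2 y) ∧
        ∀ x, p.2 x < Nat.card {y : Fin n // p.1.SameCycle x y}}) := by
  refine ⟨{
    toFun := fun ⟨S, hS⟩ => ⟨(σS hS, wS hS), numCycles_σS hS,
      fun x y h => wS_sameCycle hS h, fun x => wS_lt_per hS x⟩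
    invFun := fun ⟨⟨σ, w⟩, hm, hw, hlt⟩ => ⟨S' σ w, isOP_S' σ w hm hw⟩
    left_inv := ?_
    right_inv := ?_ }⟩
  · rintro ⟨S, hS⟩
    exact Subtype.ext (S'_σS hS)
  · rintro ⟨⟨σ, w⟩, hm, hw, hlt⟩
    apply Subtype.ext
    simp only
    have h1 := σS_S' σ w hm hw
    have h2 := wS_S' σ w hm hw hlt
    rw [Prod.mk.injEq]
    exact ⟨h1, h2⟩
end

section
/- For nonnegative integers n, m, k, v, j with m ≤ n−1, the coefficient of t^m in the polynomial C(t(k−v)+n−1−j, n−1) (as a polynomial in t) equals (1/(n−1)!)·(k−v)^m · P^{n−1−m}_{−j+1, n−1−j}, where P^s_{u,v} is the s-th elementary symmetric function of the integers in the interval [u,v]. -/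
open Polynomial

/-- `P^s_{u,v}`: the `s`-th elementary symmetric function of the integers in `[u,v]`. -/
noncomputable def esymmInterval (u v : ℤ) (s : ℕ) : ℤ :=
  ∑ I ∈ (Finset.Icc u v).powersetCard s, ∏ i ∈ I, i

/-- The polynomial (in `t`) `C(t(k-v)+n-1-j, n-1)
  = (1/(n-1)!) ∏_{s=0}^{n-2} (t(k-v) + n-1-j-s)`. -/
noncomputable def binomPoly (n k v j : ℕ) : Polynomial ℚ :=
  Polynomial.C (((n - 1).factorial : ℚ))⁻¹ *
    ∏ s ∈ Finset.range (n - 1),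
      (Polynomial.C ((k : ℚ) - (v : ℚ)) * Polynomial.X
        + Polynomial.C ((n : ℚ) - 1 - (j : ℚ) - (s : ℚ)))

lemma coeff_prod_linear {ι : Type*} (S : Finset ι) (a : ℚ) (b : ι → ℚ) {m : ℕ}
    (hm : m ≤ S.card) :
    (∏ i ∈ S, (Polynomial.C a * Polynomial.X + Polynomial.C (b i))).coeff m
      = a ^ m * ∑ A ∈ S.powersetCard (S.card - m), ∏ i ∈ A, b i := by
  rcases eq_or_ne a 0 with rfl | ha
  · simp only [map_zero, zero_mul, zero_add, ← map_prod, Polynomial.coeff_C]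
    cases m with
    | zero => simp [Finset.powersetCard_self]
    | succ m => simp
  · have key : ∀ i, Polynomial.C a * Polynomial.X + Polynomial.C (b i)
        = Polynomial.C a * (Polynomial.X + Polynomial.C (b i / a)) := fun i => by
      rw [mul_add, ← Polynomial.C_mul, mul_div_cancel₀ _ ha]
    simp_rw [key, Finset.prod_mul_distrib, Finset.prod_const, ← Polynomial.C_pow,
      Polynomial.coeff_C_mul, Finset.prod_X_add_C_coeff _ _ hm, Finset.mul_sum]
    refine Finset.sum_congr rfl fun A hA => ?_
    have hcard : A.card = S.card - m := (Finset.mem_powersetCard.mp hA).2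
    rw [Finset.prod_div_distrib, Finset.prod_const, hcard]
    have hpow : (a : ℚ) ^ S.card = a ^ m * a ^ (S.card - m) := by
      rw [← pow_add, Nat.add_sub_cancel' hm]
    rw [hpow]
    field_simp

theorem stmt9 (n m k v j : ℕ) (hn : 0 < n) (hm : m ≤ n - 1) :
    (binomPoly n k v j).coeff m
      = (1 / ((n - 1).factorial : ℚ)) * ((k : ℚ) - (v : ℚ)) ^ m *
          ((esymmInterval (1 - (j : ℤ)) ((n : ℤ) - 1 - (j : ℤ)) (n - 1 - m)) : ℚ) := by
  have hcard : (Finset.range (n - 1)).card = n - 1 := Finset.card_range _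
  rw [binomPoly, Polynomial.coeff_C_mul,
    coeff_prod_linear _ _ _ (by rw [hcard]; exact hm), hcard]
  -- identify the interval with the image of `range (n-1)`
  have hinj : Function.Injective (fun s : ℕ => (n : ℤ) - 1 - (j : ℤ) - s) := by
    intro x y hxy
    simp only at hxy
    omega
  set f : ℕ ↪ ℤ := ⟨fun s => (n : ℤ) - 1 - (j : ℤ) - s, hinj⟩ with hf
  have hIcc : Finset.Icc (1 - (j : ℤ)) ((n : ℤ) - 1 - (j : ℤ))
      = (Finset.range (n - 1)).map f := by
    ext x
    simp only [Finset.mem_Icc, Finset.mem_map, Finset.mem_range, hf,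
      Function.Embedding.coeFn_mk]
    constructor
    · rintro ⟨h1, h2⟩
      refine ⟨((n : ℤ) - 1 - (j : ℤ) - x).toNat, ?_, ?_⟩ <;> omega
    · rintro ⟨s, hs, rfl⟩
      omega
  have hes : esymmInterval (1 - (j : ℤ)) ((n : ℤ) - 1 - (j : ℤ)) (n - 1 - m)
      = ∑ A ∈ (Finset.range (n - 1)).powersetCard (n - 1 - m),
          ∏ s ∈ A, ((n : ℤ) - 1 - (j : ℤ) - s) := by
    rw [esymmInterval, hIcc, Finset.powersetCard_map, Finset.sum_map]
    refine Finset.sum_congr rfl fun A _ => ?_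
    rw [show (Finset.mapEmbedding f).toEmbedding A = A.map f from rfl, Finset.prod_map]
    rfl
  rw [hes]
  push_cast
  ring
end

section
/- For all integers n ≥ 1, b ≥ 1 and a ≥ 0, the coefficient of x^a in (1+x+⋯+x^{b−1})^n equals ∑_{j=0}^{⌊a/b⌋} (−1)^j C(n,j) C(n−1+a−bj, n−1). -/
open PowerSeries in
theorem stmt10 (n b a : ℕ) (hn : 1 ≤ n) (hb : 1 ≤ b) :
    ((∑ i ∈ Finset.range b, (Polynomial.X : Polynomial ℤ) ^ i) ^ n).coeff a
      = ∑ j ∈ Finset.range (a / b + 1),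
          (-1 : ℤ) ^ j * (n.choose j : ℤ) * ((n - 1 + a - b * j).choose (n - 1) : ℤ) := by
  have key : ((((∑ i ∈ Finset.range b, (Polynomial.X : Polynomial ℤ) ^ i) ^ n : Polynomial ℤ) : ℤ⟦X⟧))
      = (∑ j ∈ Finset.range (n+1), ((-1:ℤ)^j * n.choose j) • X ^ (b*j)) * (invOneSubPow ℤ n).val := by
    have h1 : ((∑ i ∈ Finset.range b, (Polynomial.X : Polynomial ℤ) ^ i : Polynomial ℤ) : ℤ⟦X⟧)
        * (1 - X) = 1 - X ^ b := by
      have := geom_sum_mul (X : ℤ⟦X⟧) b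
      rw [← Polynomial.coeToPowerSeries.ringHom_apply, map_sum]
      simp only [map_pow, Polynomial.coeToPowerSeries.ringHom_apply, Polynomial.coe_X]
      linear_combination -this
    have h2 : ((1 : ℤ⟦X⟧) - X ^ b) ^ n
        = ∑ j ∈ Finset.range (n+1), ((-1:ℤ)^j * n.choose j) • X ^ (b*j) := by
      rw [sub_eq_add_neg, add_comm, add_pow]
      refine Finset.sum_congr rfl fun j hj => ?_
      rw [neg_pow, one_pow, mul_one, pow_mul]
      simp only [zsmul_eq_mul]
      push_cast
      ring
    calc ((((∑ i ∈ Finset.range b, (Polynomial.X : Polynomial ℤ) ^ i) ^ n : Polynomial ℤ) : ℤ⟦X⟧))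
        = (((∑ i ∈ Finset.range b, (Polynomial.X : Polynomial ℤ) ^ i : Polynomial ℤ) : ℤ⟦X⟧)
            * (1 - X)) ^ n * (invOneSubPow ℤ n).val := by
          rw [mul_pow, mul_assoc, ← invOneSubPow_inv_eq_one_sub_pow, Units.inv_eq_val_inv,
            Units.inv_mul, mul_one, Polynomial.coe_pow]
      _ = _ := by rw [h1, h2]
  rw [← Polynomial.coeff_coe, key, Finset.sum_mul, map_sum]
  have hg : ∀ j, (PowerSeries.coeff (R := ℤ) a) (((-1:ℤ)^j * n.choose j) • X ^ (b*j) * (invOneSubPow ℤ n).val)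
      = (-1:ℤ)^j * (n.choose j : ℤ) *
          (if b * j ≤ a then ((n - 1 + a - b * j).choose (n-1) : ℤ) else 0) := by
    intro j
    rw [smul_mul_assoc, map_smul, smul_eq_mul, coeff_X_pow_mul',
      invOneSubPow_val_eq_mk_sub_one_add_choose_of_pos ℤ n hn, coeff_mk]
    split_ifs with h
    · have : n - 1 + (a - b * j) = n - 1 + a - b * j := by omega
      rw [this]
    · rw [mul_zero]
  simp only [hg]
  set f : ℕ → ℤ := fun j => (-1:ℤ)^j * (n.choose j : ℤ) *
      (if b * j ≤ a then ((n - 1 + a - b * j).choose (n-1) : ℤ) else 0) with hf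
  have hiff : ∀ x, b * x ≤ a ↔ x ≤ a / b := fun x => by
    rw [Nat.le_div_iff_mul_le hb, mul_comm]
  calc ∑ j ∈ Finset.range (n+1), f j
      = ∑ j ∈ Finset.range (max n (a/b) + 1), f j := by
        refine Finset.sum_subset (Finset.range_subset_range.mpr (by omega)) fun x _ hx => ?_
        have hx' : n < x := by simp at hx ⊢; omega
        simp [hf, Nat.choose_eq_zero_of_lt hx']
    _ = ∑ j ∈ Finset.range (a/b + 1), f j := by
        refine (Finset.sum_subset (Finset.range_subset_range.mpr (by omega)) fun x _ hx => ?_).symm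
        have hx' : a/b < x := by simp at hx ⊢; omega
        simp [hf, (hiff x).not.mpr (by omega)]
    _ = _ := by
        refine Finset.sum_congr rfl fun x hx => ?_
        have : b * x ≤ a := (hiff x).mpr (by simp at hx; omega)
        simp [hf, this]
end

section
/- Let c = (c_1,…,c_n) ∈ ℤ_{>0}^n and 0 < k < c_1+⋯+c_n. Then the leading coefficient (coefficient of t^{n−1}) of the Ehrhart polynomial of R_{k,c} equals (1/(n−1)!) ∑_{ℓ=0}^{k−1} B(ℓ,c)·A(n−1, k−ℓ−1), where B(ℓ,c) is the number of integer vectors (b_1,…,b_n) with 0 ≤ b_i ≤ c_i−1 and ∑ b_i = ℓ, and A(n−1,i) is the Eulerian number. -/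
open scoped Classical

/-- The number of descents of a permutation `σ` of `Fin m`. -/
noncomputable def descNum {m : ℕ} (σ : Equiv.Perm (Fin m)) : ℕ :=
  (Finset.univ.filter
    (fun j : Fin m => ∃ h : (j : ℕ) + 1 < m, σ ⟨(j : ℕ) + 1, h⟩ < σ j)).card

/-- The Eulerian number `A(m,i)`. -/
noncomputable def eulerian (m i : ℕ) : ℕ :=
  Nat.card {σ : Equiv.Perm (Fin m) // descNum σ = i}

/-- `B(ℓ,c)`: the number of ways of placing `ℓ` indistinguishable balls into `n` boxes of
capacities `c 1 - 1, …, c n - 1`. -/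
def ballCount (n : ℕ) (c : Fin n → ℕ) (ℓ : ℕ) : ℕ :=
  ((Fintype.piFinset (fun i : Fin n => Finset.range (c i))).filter
    (fun b => ∑ i, b i = ℓ)).card

/-- The number of lattice points of the `t`-th dilate of the slice of prism `R_{k,c}`. -/
def sliceCount (n : ℕ) (c : Fin n → ℕ) (k t : ℕ) : ℕ :=
  ((Fintype.piFinset (fun i : Fin n => Finset.range (c i * t + 1))).filter
    (fun x => ∑ i, x i = k * t)).card

/-! ### Auxiliary development -/

open Finset

noncomputable def geomPS (b : ℕ) : PowerSeries ℚ := ∑ j ∈ Finset.range b, PowerSeries.X ^ j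

lemma coeff_geomPS (b r : ℕ) :
    PowerSeries.coeff r (geomPS b) = if r < b then 1 else 0 := by
  rw [geomPS, map_sum]
  simp only [PowerSeries.coeff_X_pow]
  rw [Finset.sum_ite_eq (Finset.range b) r (fun _ => (1:ℚ))]
  simp [Finset.mem_range]

lemma coeff_prod_geomPS (n : ℕ) (b : Fin n → ℕ) (N : ℕ) :
    PowerSeries.coeff N (∏ i, geomPS (b i)) =
      (((Fintype.piFinset fun i : Fin n => Finset.range (b i)).filter
        (fun x => ∑ i, x i = N)).card : ℚ) := by
  rw [PowerSeries.coeff_prod]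
  have h1 : ∀ l : Fin n →₀ ℕ, (∏ i, PowerSeries.coeff (l i) (geomPS (b i)))
      = if (∀ i, l i < b i) then (1:ℚ) else 0 := by
    intro l
    simp only [coeff_geomPS]
    rw [Finset.prod_boole]
    congr 1
    simp
  rw [Finset.sum_congr rfl (fun l _ => h1 l), Finset.sum_ite, Finset.sum_const_zero,
    Finset.sum_const, add_zero, nsmul_eq_mul, mul_one]
  congr 1
  apply Finset.card_bij (fun l _ => (l : Fin n →₀ ℕ).toFun)
  · intro l hl
    simp only [Finset.mem_filter, Finset.mem_finsuppAntidiag] at hl ⊢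
    refine ⟨Fintype.mem_piFinset.2 fun i => Finset.mem_range.2 (hl.2 i), ?_⟩
    exact hl.1.1
  · intro l₁ h₁ l₂ h₂ h
    have : (⇑l₁ : Fin n → ℕ) = ⇑l₂ := h
    exact DFunLike.coe_injective this
  · intro x hx
    simp only [Finset.mem_filter, Fintype.mem_piFinset, Finset.mem_range] at hx
    refine ⟨Finsupp.equivFunOnFinite.symm x, ?_, ?_⟩
    · simp only [Finset.mem_filter, Finset.mem_finsuppAntidiag]
      refine ⟨⟨?_, Finset.subset_univ _⟩, fun i => by simpa using hx.1 i⟩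
      simpa using hx.2
    · ext i
      simp [Finsupp.equivFunOnFinite]

lemma one_sub_X_mul_geomPS (b : ℕ) :
    (1 - PowerSeries.X : PowerSeries ℚ) * geomPS b = 1 - PowerSeries.X ^ b := by
  have h := geom_sum_mul (PowerSeries.X : PowerSeries ℚ) b
  rw [geomPS]
  linear_combination -h

lemma prod_geomPS_mul_pow (n : ℕ) (b : Fin n → ℕ) :
    (∏ i, geomPS (b i)) * (1 - PowerSeries.X : PowerSeries ℚ) ^ n
      = ∏ i, (1 - PowerSeries.X ^ (b i)) := by
  calc (∏ i, geomPS (b i)) * (1 - PowerSeries.X : PowerSeries ℚ) ^ n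
      = ∏ i, ((1 - PowerSeries.X : PowerSeries ℚ) * geomPS (b i)) := by
        rw [Finset.prod_mul_distrib]
        rw [Finset.prod_const, Finset.card_univ, Fintype.card_fin]
        ring
    _ = ∏ i, (1 - PowerSeries.X ^ (b i)) := by
        exact Finset.prod_congr rfl fun i _ => one_sub_X_mul_geomPS (b i)

lemma prod_one_sub_X_pow (n : ℕ) (b : Fin n → ℕ) :
    (∏ i, (1 - PowerSeries.X ^ (b i) : PowerSeries ℚ))
      = ∑ S ∈ (Finset.univ : Finset (Fin n)).powerset,
          (-1 : PowerSeries ℚ) ^ S.card * PowerSeries.X ^ (∑ i ∈ S, b i) := by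
  have : ∀ i : Fin n, (1 - PowerSeries.X ^ (b i) : PowerSeries ℚ)
      = -(PowerSeries.X ^ (b i)) + 1 := by intro i; ring
  rw [Finset.prod_congr rfl fun i _ => this i, Finset.prod_add]
  refine Finset.sum_congr rfl fun S _ => ?_
  rw [Finset.prod_const_one, mul_one]
  rw [show (fun i => -(PowerSeries.X ^ (b i) : PowerSeries ℚ))
      = fun i => (-1) * (PowerSeries.X ^ (b i)) by funext i; ring]
  rw [Finset.prod_mul_distrib, Finset.prod_const, Finset.prod_pow_eq_pow_sum]

lemma prod_geomPS_eq (n : ℕ) (b : Fin n → ℕ) :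
    (∏ i, geomPS (b i))
      = (∑ S ∈ (Finset.univ : Finset (Fin n)).powerset,
          (-1 : PowerSeries ℚ) ^ S.card * PowerSeries.X ^ (∑ i ∈ S, b i))
        * (PowerSeries.invOneSubPow ℚ n).val := by
  have h1 : ((1 - PowerSeries.X : PowerSeries ℚ)) ^ n * (PowerSeries.invOneSubPow ℚ n).val = 1 := by
    rw [← PowerSeries.invOneSubPow_inv_eq_one_sub_pow]
    exact (PowerSeries.invOneSubPow ℚ n).inv_val
  calc (∏ i, geomPS (b i)) = (∏ i, geomPS (b i)) *
        (((1 - PowerSeries.X : PowerSeries ℚ)) ^ n * (PowerSeries.invOneSubPow ℚ n).val) := by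
        rw [h1, mul_one]
    _ = ((∏ i, geomPS (b i)) * ((1 - PowerSeries.X : PowerSeries ℚ)) ^ n)
          * (PowerSeries.invOneSubPow ℚ n).val := by ring
    _ = _ := by rw [prod_geomPS_mul_pow, prod_one_sub_X_pow]

lemma coeff_X_pow_mul_inv (nn a N : ℕ) :
    PowerSeries.coeff N (PowerSeries.X ^ a * (PowerSeries.invOneSubPow ℚ (nn + 1)).val)
      = if a ≤ N then ((nn + (N - a)).choose nn : ℚ) else 0 := by
  rw [mul_comm, PowerSeries.coeff_mul_X_pow', PowerSeries.invOneSubPow_val_succ_eq_mk_add_choose]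
  split_ifs with h
  · rw [PowerSeries.coeff_mk]
  · rfl

lemma sliceCount_formula (n k : ℕ) (c : Fin n → ℕ) (hn : 0 < n)
    (hk0 : 0 < k) (t : ℕ) (ht : n ≤ t) :
    (sliceCount n c k t : ℚ) =
      ∑ S ∈ (Finset.univ : Finset (Fin n)).powerset.filter
          (fun S => ∑ i ∈ S, c i < k),
        (-1 : ℚ) ^ S.card *
          (((n - 1) + (k * t - ∑ i ∈ S, (c i * t + 1))).choose (n - 1) : ℚ) := by
  have hslice : (sliceCount n c k t : ℚ)
      = PowerSeries.coeff (k * t) (∏ i, geomPS (c i * t + 1)) := by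
    rw [coeff_prod_geomPS]; rfl
  obtain ⟨d, rfl⟩ : ∃ d, n = d + 1 := ⟨n - 1, by omega⟩
  rw [hslice, prod_geomPS_eq, Finset.sum_mul, map_sum]
  have hterm : ∀ S ∈ (Finset.univ : Finset (Fin (d+1))).powerset,
      PowerSeries.coeff (k * t)
        ((-1 : PowerSeries ℚ) ^ S.card * PowerSeries.X ^ (∑ i ∈ S, (c i * t + 1))
          * (PowerSeries.invOneSubPow ℚ (d + 1)).val)
      = (-1 : ℚ) ^ S.card *
          (if (∑ i ∈ S, (c i * t + 1)) ≤ k * t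
            then ((d + (k * t - ∑ i ∈ S, (c i * t + 1))).choose d : ℚ) else 0) := by
    intro S _
    have : (-1 : PowerSeries ℚ) ^ S.card * PowerSeries.X ^ (∑ i ∈ S, (c i * t + 1))
          * (PowerSeries.invOneSubPow ℚ (d + 1)).val
        = (-1 : PowerSeries ℚ) ^ S.card * (PowerSeries.X ^ (∑ i ∈ S, (c i * t + 1))
          * (PowerSeries.invOneSubPow ℚ (d + 1)).val) := by ring
    rw [this]
    have hneg : ((-1 : PowerSeries ℚ) ^ S.card) = PowerSeries.C ((-1 : ℚ) ^ S.card) := by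
      rw [map_pow, map_neg, map_one]
    rw [hneg, PowerSeries.coeff_C_mul, coeff_X_pow_mul_inv]
  rw [Finset.sum_congr rfl hterm]
  rw [Finset.sum_filter]
  refine Finset.sum_congr rfl fun S hS => ?_
  have hcard : S.card ≤ d + 1 := by
    simpa using Finset.card_le_card (Finset.mem_powerset.1 hS)
  have hsum : ∑ i ∈ S, (c i * t + 1) = (∑ i ∈ S, c i) * t + S.card := by
    rw [Finset.sum_add_distrib, Finset.sum_const, ← Finset.sum_mul]
    simp [mul_comm]
  by_cases h : ∑ i ∈ S, c i < k
  · have hle : (∑ i ∈ S, (c i * t + 1)) ≤ k * t := by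
      rw [hsum]
      have h1 : (∑ i ∈ S, c i) * t + t ≤ k * t := by
        have h2 : ((∑ i ∈ S, c i) + 1) * t ≤ k * t := Nat.mul_le_mul_right t (by omega)
        rw [add_mul, one_mul] at h2
        omega
      have h3 : S.card ≤ t := le_trans hcard ht
      omega
    simp only [h, if_true, hle, if_true]
    norm_num
  · have hSne : S.Nonempty := by
      rcases Finset.eq_empty_or_nonempty S with rfl | hne
      · simp at h; omega
      · exact hne
    have hgt : ¬ ((∑ i ∈ S, (c i * t + 1)) ≤ k * t) := by
      rw [hsum]
      have h1 : k * t ≤ (∑ i ∈ S, c i) * t := Nat.mul_le_mul_right t (by omega)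
      have h2 : 0 < S.card := Finset.card_pos.2 hSne
      omega
    simp only [h, if_false, hgt]
    norm_num

noncomputable def qpoly (n k : ℕ) (c : Fin n → ℕ) : Polynomial ℚ :=
  ∑ S ∈ (Finset.univ : Finset (Fin n)).powerset.filter
      (fun S => ∑ i ∈ S, c i < k),
    Polynomial.C ((-1 : ℚ) ^ S.card * (((n - 1).factorial : ℚ))⁻¹) *
      ∏ j ∈ Finset.range (n - 1),
        (Polynomial.C ((k : ℚ) - (∑ i ∈ S, c i)) * Polynomial.X
          + Polynomial.C ((((n : ℚ) - 1) - S.card) - j))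

lemma prod_cast_sub_eq (M r : ℕ) (h : r ≤ M) :
    ∏ j ∈ Finset.range r, ((M : ℚ) - j) = (r.factorial : ℚ) * (M.choose r : ℚ) := by
  have h1 : ((M.descFactorial r : ℕ) : ℚ) = ∏ j ∈ Finset.range r, ((M : ℚ) - j) := by
    rw [Nat.descFactorial_eq_prod_range, Nat.cast_prod]
    refine Finset.prod_congr rfl fun j hj => ?_
    rw [Finset.mem_range] at hj
    rw [Nat.cast_sub (by omega)]
  rw [← h1, Nat.descFactorial_eq_factorial_mul_choose, Nat.cast_mul]

lemma qpoly_eval (n k : ℕ) (c : Fin n → ℕ) (hc : ∀ i, 0 < c i) (hn : 0 < n)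
    (hk0 : 0 < k) (hk : k < ∑ i, c i) (t : ℕ) (ht : n ≤ t) :
    (qpoly n k c).eval (t : ℚ) = (sliceCount n c k t : ℚ) := by
  rw [sliceCount_formula n k c hn hk0 t ht, qpoly, Polynomial.eval_finset_sum]
  refine Finset.sum_congr rfl fun S hS => ?_
  rw [Finset.mem_filter, Finset.mem_powerset] at hS
  obtain ⟨hS1, hS2⟩ := hS
  have hcard : S.card ≤ n := by simpa using Finset.card_le_card hS1
  set a := ∑ i ∈ S, c i with ha
  set s := S.card with hs
  set r := n - 1 with hr
  -- the natural-number choose argument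
  have hsum : ∑ i ∈ S, (c i * t + 1) = a * t + s := by
    rw [Finset.sum_add_distrib, Finset.sum_const, ← Finset.sum_mul]
    simp [mul_comm, ha, hs]
  have hst : s ≤ t := le_trans hcard ht
  have hat : a * t + s ≤ k * t := by
    have h2 : (a + 1) * t ≤ k * t := Nat.mul_le_mul_right t (by omega)
    rw [add_mul, one_mul] at h2
    omega
  have harg : (r + (k * t - ∑ i ∈ S, (c i * t + 1))) = r + (k * t - a * t - s) := by
    rw [hsum]; omega
  rw [harg]
  set M := r + (k * t - a * t - s) with hM
  rw [Polynomial.eval_mul, Polynomial.eval_C, Polynomial.eval_prod]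
  have hev : ∀ j ∈ Finset.range r,
      Polynomial.eval (t : ℚ) (Polynomial.C ((k : ℚ) - a) * Polynomial.X
          + Polynomial.C ((((n : ℚ) - 1) - s) - j)) = ((M : ℚ) - j) := by
    intro j hj
    rw [Polynomial.eval_add, Polynomial.eval_mul, Polynomial.eval_C, Polynomial.eval_X,
      Polynomial.eval_C]
    have hka : a ≤ k := le_of_lt hS2
    have hkt : a * t ≤ k * t := Nat.mul_le_mul_right t hka
    have hM2 : (M : ℚ) = r + ((k * t : ℚ) - (a * t : ℚ) - s) := by
      rw [hM]
      have : k * t - a * t - s = k * t - (a * t + s) := by omega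
      rw [this, Nat.cast_add, Nat.cast_sub hat]
      push_cast
      ring
    rw [hM2]
    push_cast
    have hnr : ((n : ℚ) - 1) = (r : ℚ) := by
      rw [hr]; push_cast [Nat.cast_sub (by omega : 1 ≤ n)]; ring
    rw [hnr]
    ring
  rw [Finset.prod_congr rfl hev, prod_cast_sub_eq M r (by omega)]
  rw [mul_comm ((-1:ℚ)^s * _) _, mul_assoc]
  rw [mul_comm (((r.factorial : ℚ))) _]
  field_simp

lemma qpoly_coeff (n k : ℕ) (c : Fin n → ℕ) :
    (qpoly n k c).coeff (n - 1) =
      (((n - 1).factorial : ℚ))⁻¹ *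
        ∑ S ∈ (Finset.univ : Finset (Fin n)).powerset.filter
            (fun S => ∑ i ∈ S, c i < k),
          (-1 : ℚ) ^ S.card * ((k : ℚ) - (∑ i ∈ S, c i)) ^ (n - 1) := by
  rw [qpoly, Polynomial.finset_sum_coeff, Finset.mul_sum]
  refine Finset.sum_congr rfl fun S hS => ?_
  rw [Finset.mem_filter] at hS
  have hka : ((k : ℚ) - (∑ i ∈ S, c i)) ≠ 0 := by
    have : ((∑ i ∈ S, c i : ℕ) : ℚ) < (k : ℚ) := by exact_mod_cast hS.2
    intro h0
    linarith
  set P := ∏ j ∈ Finset.range (n - 1),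
        (Polynomial.C ((k : ℚ) - (∑ i ∈ S, c i)) * Polynomial.X
          + Polynomial.C ((((n : ℚ) - 1) - S.card) - j)) with hP
  have hdeg : P.natDegree = n - 1 := by
    rw [hP, Polynomial.natDegree_prod]
    · rw [Finset.sum_congr rfl fun j _ => Polynomial.natDegree_linear hka]
      simp [Finset.sum_const]
    · intro j _
      intro hzero
      have := Polynomial.natDegree_linear (b := ((((n : ℚ) - 1) - S.card) - j)) hka
      rw [hzero] at this
      simp at this
  have hlc : P.leadingCoeff = ((k : ℚ) - (∑ i ∈ S, c i)) ^ (n - 1) := by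
    rw [hP, Polynomial.leadingCoeff_prod]
    rw [Finset.prod_congr rfl fun j _ => Polynomial.leadingCoeff_linear hka]
    simp
  rw [Polynomial.coeff_C_mul]
  rw [show P.coeff (n - 1) = P.leadingCoeff by rw [Polynomial.leadingCoeff, hdeg]]
  rw [hlc]
  ring

def PnatDesc (d : ℕ) (σ : Equiv.Perm (Fin d)) (a : ℕ) : Prop :=
  ∃ h : a + 1 < d, σ ⟨a + 1, h⟩ < σ ⟨a, Nat.lt_of_succ_lt h⟩

noncomputable def wcnt (d : ℕ) (σ : Equiv.Perm (Fin d)) (a : ℕ) : ℕ :=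
  ((Finset.range a).filter (PnatDesc d σ)).card

noncomputable def vcnt (d : ℕ) (σ : Equiv.Perm (Fin d)) (a : ℕ) : ℕ :=
  ((Finset.range a).filter (fun b => ¬ PnatDesc d σ b)).card

lemma vcnt_add_wcnt (d : ℕ) (σ : Equiv.Perm (Fin d)) (a : ℕ) :
    vcnt d σ a + wcnt d σ a = a := by
  rw [vcnt, wcnt, add_comm, Finset.card_filter_add_card_filter_not, Finset.card_range]

lemma wcnt_succ (d : ℕ) (σ : Equiv.Perm (Fin d)) (a : ℕ) :
    wcnt d σ (a + 1) = wcnt d σ a + (if PnatDesc d σ a then 1 else 0) := by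
  rw [wcnt, wcnt, Finset.range_add_one, Finset.filter_insert]
  split_ifs with h
  · rw [Finset.card_insert_of_notMem (by simp)]
  · simp

lemma vcnt_succ (d : ℕ) (σ : Equiv.Perm (Fin d)) (a : ℕ) :
    vcnt d σ (a + 1) = vcnt d σ a + (if PnatDesc d σ a then 0 else 1) := by
  rw [vcnt, vcnt, Finset.range_add_one, Finset.filter_insert]
  split_ifs with h
  · simp
  · rw [Finset.card_insert_of_notMem (by simp)]

lemma wcnt_mono (d : ℕ) (σ : Equiv.Perm (Fin d)) {a b : ℕ} (h : a ≤ b) :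
    wcnt d σ a ≤ wcnt d σ b :=
  Finset.card_le_card (Finset.filter_subset_filter _ (by simpa using Finset.range_subset_range.2 h))

lemma vcnt_mono (d : ℕ) (σ : Equiv.Perm (Fin d)) {a b : ℕ} (h : a ≤ b) :
    vcnt d σ a ≤ vcnt d σ b :=
  Finset.card_le_card (Finset.filter_subset_filter _ (by simpa using Finset.range_subset_range.2 h))

lemma descNum_eq_wcnt (d : ℕ) (σ : Equiv.Perm (Fin d)) :
    descNum σ = wcnt d σ d := by
  rw [descNum, wcnt]
  apply Finset.card_bij (fun (j : Fin d) _ => (j : ℕ))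
  · intro j hj
    rw [Finset.mem_filter] at hj ⊢
    refine ⟨Finset.mem_range.2 j.2, ?_⟩
    obtain ⟨h, hlt⟩ := hj.2
    exact ⟨h, by convert hlt using 2⟩
  · intro j₁ _ j₂ _ h
    exact Fin.ext h
  · intro b hb
    rw [Finset.mem_filter, Finset.mem_range] at hb
    refine ⟨⟨b, hb.1⟩, ?_, rfl⟩
    rw [Finset.mem_filter]
    obtain ⟨h, hlt⟩ := hb.2
    exact ⟨Finset.mem_univ _, ⟨h, by convert hlt using 2⟩⟩

lemma wcnt_sub_one (d : ℕ) (hd : 0 < d) (σ : Equiv.Perm (Fin d)) :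
    wcnt d σ (d - 1) = wcnt d σ d := by
  rw [wcnt, wcnt]
  congr 1
  ext b
  simp only [Finset.mem_filter, Finset.mem_range]
  constructor
  · rintro ⟨hb, hP⟩; exact ⟨by omega, hP⟩
  · rintro ⟨hb, hP⟩
    obtain ⟨h, -⟩ := id hP
    exact ⟨by omega, hP⟩

lemma sort_eq_iff_adj {d m : ℕ} (σ : Equiv.Perm (Fin d)) (f : Fin d → Fin m) :
    Tuple.sort f = σ ↔
      (Monotone (f ∘ σ) ∧
        ∀ a : ℕ, ∀ h : a + 1 < d, PnatDesc d σ a →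
          f (σ ⟨a, Nat.lt_of_succ_lt h⟩) < f (σ ⟨a + 1, h⟩)) := by
  rw [eq_comm, Tuple.eq_sort_iff]
  constructor
  · rintro ⟨hmono, htie⟩
    refine ⟨hmono, fun a h hP => ?_⟩
    obtain ⟨h', hlt⟩ := hP
    have hle : f (σ ⟨a, Nat.lt_of_succ_lt h⟩) ≤ f (σ ⟨a + 1, h⟩) :=
      hmono (by exact le_of_lt (Fin.mk_lt_mk.2 (by omega)))
    rcases lt_or_eq_of_le hle with hlt2 | heq
    · exact hlt2
    · have := htie ⟨a, Nat.lt_of_succ_lt h⟩ ⟨a + 1, h⟩ (Fin.mk_lt_mk.2 (by omega)) heq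
      exact absurd this (not_lt.2 (le_of_lt (by convert hlt using 2)))
  · rintro ⟨hmono, hstrict⟩
    refine ⟨hmono, ?_⟩
    have adj : ∀ a : ℕ, ∀ h : a + 1 < d,
        f (σ ⟨a, Nat.lt_of_succ_lt h⟩) = f (σ ⟨a + 1, h⟩) →
        σ ⟨a, Nat.lt_of_succ_lt h⟩ < σ ⟨a + 1, h⟩ := by
      intro a h heq
      by_cases hP : PnatDesc d σ a
      · exact absurd (hstrict a h hP) (by rw [heq]; exact lt_irrefl _)
      · rw [PnatDesc] at hP
        push_neg at hP
        have hle : σ ⟨a, Nat.lt_of_succ_lt h⟩ ≤ σ ⟨a + 1, h⟩ := hP h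
        exact lt_of_le_of_ne hle (fun hc => by
          have : (⟨a, Nat.lt_of_succ_lt h⟩ : Fin d) = ⟨a + 1, h⟩ := σ.injective hc
          simp [Fin.ext_iff] at this)
    have key : ∀ r : ℕ, ∀ a : ℕ, ∀ h : a + r < d, 0 < r →
        f (σ ⟨a, by omega⟩) = f (σ ⟨a + r, h⟩) → σ ⟨a, by omega⟩ < σ ⟨a + r, h⟩ := by
      intro r
      induction r with
      | zero => intro a h h0; omega
      | succ r ih =>
        intro a h _ heq
        rcases Nat.eq_zero_or_pos r with rfl | hr
        · exact adj a (by omega) (by convert heq using 3 <;> omega)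
        · have h1 : a + r < d := by omega
          have hle1 : f (σ ⟨a, by omega⟩) ≤ f (σ ⟨a + r, h1⟩) :=
            hmono (le_of_lt (Fin.mk_lt_mk.2 (by omega)))
          have hle2 : f (σ ⟨a + r, h1⟩) ≤ f (σ ⟨a + r + 1, by omega⟩) :=
            hmono (le_of_lt (Fin.mk_lt_mk.2 (by omega)))
          have heq' : f (σ ⟨a, by omega⟩) = f (σ ⟨a + r, h1⟩) := by
            refine le_antisymm hle1 ?_
            have : f (σ ⟨a + r + 1, by omega⟩) = f (σ ⟨a + (r+1), h⟩) := by congr 2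
            rw [this, ← heq] at hle2
            exact hle2
          have l1 := ih a h1 hr heq'
          have l2 : σ ⟨a + r, h1⟩ < σ ⟨a + r + 1, by omega⟩ := by
            apply adj (a + r) (by omega)
            have e1 : f (σ ⟨a + r + 1, by omega⟩) = f (σ ⟨a + (r+1), h⟩) := by congr 2
            rw [e1, ← heq, heq']
          have : σ ⟨a + r + 1, by omega⟩ = σ ⟨a + (r + 1), h⟩ := by congr 1
          rw [← this]
          exact lt_trans l1 l2
    intro i j hij heq
    have hj : (j : ℕ) = (i : ℕ) + ((j : ℕ) - (i : ℕ)) := by omega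
    have hik : (i : Fin d) = ⟨(i : ℕ), i.2⟩ := by simp
    have hjk : (j : Fin d) = ⟨(i : ℕ) + ((j : ℕ) - (i : ℕ)), by omega⟩ := by
      apply Fin.ext; simp; omega
    rw [hik, hjk] at heq ⊢
    exact key ((j : ℕ) - (i : ℕ)) (i : ℕ) (by omega) (by omega) heq

lemma strictMono_fin_le_add {d N : ℕ} (u : Fin d → Fin N) (hu : StrictMono u) :
    ∀ r a : ℕ, ∀ h : a + r < d, (u ⟨a, by omega⟩ : ℕ) + r ≤ (u ⟨a + r, h⟩ : ℕ) := by
  intro r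
  induction r with
  | zero => intro a h; simp
  | succ r ih =>
    intro a h
    have h1 : a + r < d := by omega
    have l1 := ih a h1
    have l2 : u ⟨a + r, h1⟩ < u ⟨a + r + 1, by omega⟩ := hu (Fin.mk_lt_mk.2 (by omega))
    have : u ⟨a + r + 1, by omega⟩ = u ⟨a + (r + 1), h⟩ := by congr 1
    rw [← this]
    have := Fin.lt_iff_val_lt_val.1 l2
    omega


lemma lt_of_adj {d : ℕ} {α : Type*} [Preorder α] (u : Fin d → α)
    (h : ∀ a : ℕ, ∀ h : a + 1 < d, u ⟨a, Nat.lt_of_succ_lt h⟩ < u ⟨a + 1, h⟩) :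
    StrictMono u := by
  have key : ∀ r a : ℕ, ∀ hh : a + r < d, 0 < r → u ⟨a, by omega⟩ < u ⟨a + r, hh⟩ := by
    intro r
    induction r with
    | zero => intro a hh h0; omega
    | succ r ih =>
      intro a hh _
      rcases Nat.eq_zero_or_pos r with rfl | hr
      · exact h a hh
      · have h1 : a + r < d := by omega
        have l1 := ih a h1 hr
        have l2 : u ⟨a + r, h1⟩ < u ⟨a + r + 1, by omega⟩ := h (a + r) (by omega)
        have e : u ⟨a + r + 1, by omega⟩ = u ⟨a + (r + 1), hh⟩ := by congr 1
        rw [← e]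
        exact lt_trans l1 l2
  intro a b hab
  have ea : a = ⟨(a : ℕ), a.2⟩ := by simp
  have eb : b = ⟨(a : ℕ) + ((b : ℕ) - (a : ℕ)), by omega⟩ := by
    apply Fin.ext; simp; omega
  rw [ea, eb]
  exact key ((b : ℕ) - (a : ℕ)) (a : ℕ) (by omega) (by omega)

lemma mono_of_adj {d : ℕ} {α : Type*} [Preorder α] (u : Fin d → α)
    (h : ∀ a : ℕ, ∀ h : a + 1 < d, u ⟨a, Nat.lt_of_succ_lt h⟩ ≤ u ⟨a + 1, h⟩) :
    Monotone u := by
  have key : ∀ r a : ℕ, ∀ hh : a + r < d, u ⟨a, by omega⟩ ≤ u ⟨a + r, hh⟩ := by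
    intro r
    induction r with
    | zero => intro a hh; simp
    | succ r ih =>
      intro a hh
      have h1 : a + r < d := by omega
      have l1 := ih a h1
      have l2 : u ⟨a + r, h1⟩ ≤ u ⟨a + r + 1, by omega⟩ := h (a + r) (by omega)
      have e : u ⟨a + r + 1, by omega⟩ = u ⟨a + (r + 1), hh⟩ := by congr 1
      rw [← e]
      exact le_trans l1 l2
  intro a b hab
  have ea : a = ⟨(a : ℕ), a.2⟩ := by simp
  have eb : b = ⟨(a : ℕ) + ((b : ℕ) - (a : ℕ)), by omega⟩ := by
    apply Fin.ext; simp; omega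
  rw [ea, eb]
  exact key ((b : ℕ) - (a : ℕ)) (a : ℕ) (by omega)

lemma fiber_card (d m : ℕ) (hd : 0 < d) (σ : Equiv.Perm (Fin d)) :
    ((Finset.univ : Finset (Fin d → Fin m)).filter (fun f => Tuple.sort f = σ)).card
      = ((m - descNum σ) + (d - 1)).choose d := by
  set i := descNum σ with hi
  have hwd : wcnt d σ (d - 1) = i := by
    rw [hi, descNum_eq_wcnt]
    exact wcnt_sub_one d hd σ
  have gW : ∀ f : Fin d → Fin m, Tuple.sort f = σ →
      ∀ a : ℕ, ∀ h : a < d, wcnt d σ a ≤ (f (σ ⟨a, h⟩) : ℕ) := by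
    intro f hf
    obtain ⟨hmono, hstrict⟩ := (sort_eq_iff_adj σ f).1 hf
    intro a
    induction a with
    | zero => intro h; simp [wcnt]
    | succ a ih =>
      intro h
      have h1 : a < d := by omega
      have l1 := ih h1
      rw [wcnt_succ]
      by_cases hP : PnatDesc d σ a
      · rw [if_pos hP]
        have := hstrict a h hP
        have := Fin.lt_iff_val_lt_val.1 this
        omega
      · rw [if_neg hP]
        have : f (σ ⟨a, h1⟩) ≤ f (σ ⟨a + 1, h⟩) :=
          hmono (le_of_lt (Fin.mk_lt_mk.2 (by omega)))
        have := Fin.le_iff_val_le_val.1 this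
        omega
  by_cases him : m ≤ i
  · -- fiber is empty
    have hempty : (Finset.univ : Finset (Fin d → Fin m)).filter (fun f => Tuple.sort f = σ)
        = ∅ := by
      rw [Finset.eq_empty_iff_forall_notMem]
      intro f hf
      rw [Finset.mem_filter] at hf
      have := gW f hf.2 (d - 1) (by omega)
      rw [hwd] at this
      have := (f (σ ⟨d - 1, by omega⟩)).2
      omega
    rw [hempty, Finset.card_empty]
    have : m - i = 0 := by omega
    rw [this, zero_add, eq_comm]
    exact Nat.choose_eq_zero_of_lt (by omega)
  push_neg at him
  set N := (m - i) + (d - 1) with hN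
  have hvb : ∀ j : Fin d, vcnt d σ (j : ℕ) + i ≤ d - 1 := by
    intro j
    have h1 : vcnt d σ (j : ℕ) ≤ vcnt d σ (d - 1) := vcnt_mono d σ (by omega)
    have h2 := vcnt_add_wcnt d σ (d - 1)
    omega
  have hub : ∀ (f : Fin d → Fin m) (j : Fin d),
      (f (σ j) : ℕ) + vcnt d σ (j : ℕ) < N := by
    intro f j
    have := (f (σ j)).2
    have := hvb j
    omega
  set u : (Fin d → Fin m) → Fin d → Fin N := fun f j => ⟨(f (σ j) : ℕ) + vcnt d σ (j : ℕ), hub f j⟩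
    with hu
  have husm : ∀ f : Fin d → Fin m, Tuple.sort f = σ → StrictMono (u f) := by
    intro f hf
    obtain ⟨hmono, hstrict⟩ := (sort_eq_iff_adj σ f).1 hf
    apply lt_of_adj
    intro a h
    rw [Fin.lt_iff_val_lt_val]
    show (f (σ ⟨a, Nat.lt_of_succ_lt h⟩) : ℕ) + vcnt d σ a
        < (f (σ ⟨a + 1, h⟩) : ℕ) + vcnt d σ (a + 1)
    rw [vcnt_succ]
    by_cases hP : PnatDesc d σ a
    · rw [if_pos hP]
      have h2 := hstrict a h hP
      have := Fin.lt_iff_val_lt_val.1 h2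
      omega
    · rw [if_neg hP]
      have h2 : f (σ ⟨a, Nat.lt_of_succ_lt h⟩) ≤ f (σ ⟨a + 1, h⟩) :=
        hmono (le_of_lt (Fin.mk_lt_mk.2 (by omega)))
      have := Fin.le_iff_val_le_val.1 h2
      omega
  rw [show ((m - i) + (d - 1)).choose d
      = (Finset.powersetCard d (Finset.univ : Finset (Fin N))).card by
    rw [Finset.card_powersetCard, Finset.card_univ, Fintype.card_fin]]
  apply Finset.card_bij (fun f _ => Finset.image (u f) Finset.univ)
  · intro f hf
    rw [Finset.mem_filter] at hf
    rw [Finset.mem_powersetCard]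
    refine ⟨Finset.subset_univ _, ?_⟩
    rw [Finset.card_image_of_injective _ (husm f hf.2).injective, Finset.card_univ,
      Fintype.card_fin]
  · intro f₁ h₁ f₂ h₂ heq
    rw [Finset.mem_filter] at h₁ h₂
    have hT : (Finset.image (u f₁) Finset.univ).card = d := by
      rw [Finset.card_image_of_injective _ (husm f₁ h₁.2).injective, Finset.card_univ,
        Fintype.card_fin]
    have e₁ : u f₁ = (Finset.image (u f₁) Finset.univ).orderEmbOfFin hT :=
      Finset.orderEmbOfFin_unique hT (fun x => Finset.mem_image_of_mem _ (Finset.mem_univ x))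
        (husm f₁ h₁.2)
    have e₂ : u f₂ = (Finset.image (u f₁) Finset.univ).orderEmbOfFin hT :=
      Finset.orderEmbOfFin_unique hT
        (fun x => by rw [heq]; exact Finset.mem_image_of_mem _ (Finset.mem_univ x))
        (husm f₂ h₂.2)
    have e3 : u f₁ = u f₂ := by rw [e₁, e₂]
    funext x
    have h5 := congrFun e3 (σ.symm x)
    have h6 : (f₁ (σ (σ.symm x)) : ℕ) + vcnt d σ ((σ.symm x : Fin d) : ℕ)
        = (f₂ (σ (σ.symm x)) : ℕ) + vcnt d σ ((σ.symm x : Fin d) : ℕ) := congrArg Fin.val h5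
    rw [σ.apply_symm_apply] at h6
    exact Fin.ext (by omega)
  · intro T hT
    rw [Finset.mem_powersetCard] at hT
    obtain ⟨-, hTd⟩ := hT
    set uT := T.orderEmbOfFin hTd with huT
    have husmT : StrictMono uT := uT.strictMono
    have hSM := strictMono_fin_le_add uT husmT
    have hjle : ∀ j : Fin d, (j : ℕ) ≤ (uT j : ℕ) := by
      intro j
      have := hSM (j : ℕ) 0 (by omega)
      have hj0 : (⟨0 + (j : ℕ), by omega⟩ : Fin d) = j := by apply Fin.ext; simp
      rw [hj0] at this
      omega
    have hvle : ∀ j : Fin d, vcnt d σ (j : ℕ) ≤ (uT j : ℕ) := by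
      intro j
      have h1 := vcnt_add_wcnt d σ (j : ℕ)
      have := hjle j
      omega
    have hglt : ∀ j : Fin d, (uT j : ℕ) - vcnt d σ (j : ℕ) < m := by
      intro j
      have h1 := hSM ((d - 1) - (j : ℕ)) (j : ℕ) (by omega)
      have e1 : (⟨(j : ℕ), by omega⟩ : Fin d) = j := by apply Fin.ext; rfl
      rw [e1] at h1
      have h2 : (uT ⟨(j : ℕ) + ((d - 1) - (j : ℕ)), by omega⟩ : ℕ) < N :=
        (uT ⟨(j : ℕ) + ((d - 1) - (j : ℕ)), by omega⟩).2
      have h3 := vcnt_add_wcnt d σ (j : ℕ)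
      have h4 : wcnt d σ (j : ℕ) ≤ i := by
        rw [← hwd]; exact wcnt_mono d σ (by omega)
      have h5 : (j : ℕ) < d := j.2
      have h6 : N = m - i + (d - 1) := hN
      omega
    set g : Fin d → Fin m := fun j => ⟨(uT j : ℕ) - vcnt d σ (j : ℕ), hglt j⟩ with hg
    set f : Fin d → Fin m := fun x => g (σ.symm x) with hf
    have hfσ : ∀ j : Fin d, f (σ j) = g j := by
      intro j; rw [hf]; simp
    have hsort : Tuple.sort f = σ := by
      rw [sort_eq_iff_adj]
      constructor
      · have hcomp : f ∘ σ = g := funext hfσ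
        rw [hcomp]
        apply mono_of_adj
        intro a h
        rw [Fin.le_iff_val_le_val]
        show (uT ⟨a, Nat.lt_of_succ_lt h⟩ : ℕ) - vcnt d σ a
            ≤ (uT ⟨a + 1, h⟩ : ℕ) - vcnt d σ (a + 1)
        rw [vcnt_succ]
        have h1 : uT ⟨a, Nat.lt_of_succ_lt h⟩ < uT ⟨a + 1, h⟩ :=
          husmT (Fin.mk_lt_mk.2 (by omega))
        have h1' := Fin.lt_iff_val_lt_val.1 h1
        have h2 := hvle ⟨a, Nat.lt_of_succ_lt h⟩
        simp only at h2
        split_ifs with hP <;> omega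
      · intro a h hP
        rw [hfσ ⟨a, Nat.lt_of_succ_lt h⟩, hfσ ⟨a + 1, h⟩]
        rw [Fin.lt_iff_val_lt_val]
        show (uT ⟨a, Nat.lt_of_succ_lt h⟩ : ℕ) - vcnt d σ a
            < (uT ⟨a + 1, h⟩ : ℕ) - vcnt d σ (a + 1)
        rw [vcnt_succ, if_pos hP]
        have h1 : uT ⟨a, Nat.lt_of_succ_lt h⟩ < uT ⟨a + 1, h⟩ :=
          husmT (Fin.mk_lt_mk.2 (by omega))
        have h1' := Fin.lt_iff_val_lt_val.1 h1
        have h2 := hvle ⟨a, Nat.lt_of_succ_lt h⟩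
        simp only at h2
        omega
    refine ⟨f, ?_, ?_⟩
    · rw [Finset.mem_filter]; exact ⟨Finset.mem_univ _, hsort⟩
    · have hufj : ∀ j : Fin d, u f j = uT j := by
        intro j
        apply Fin.ext
        show (f (σ j) : ℕ) + vcnt d σ (j : ℕ) = (uT j : ℕ)
        rw [hfσ j]
        show ((uT j : ℕ) - vcnt d σ (j : ℕ)) + vcnt d σ (j : ℕ) = (uT j : ℕ)
        have := hvle j
        omega
      rw [show Finset.image (u f) Finset.univ = Finset.image (fun j => uT j) Finset.univ from
        Finset.image_congr (fun j _ => hufj j)]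
      apply Finset.coe_injective
      rw [Finset.coe_image, Finset.coe_univ, Set.image_univ]
      exact Finset.range_orderEmbOfFin T hTd

lemma eulerian_eq_card (d i : ℕ) :
    eulerian d i
      = ((Finset.univ : Finset (Equiv.Perm (Fin d))).filter
          (fun σ => descNum σ = i)).card := by
  rw [eulerian, Nat.card_eq_fintype_card, Fintype.card_subtype]

lemma descNum_lt (d : ℕ) (hd : 0 < d) (σ : Equiv.Perm (Fin d)) : descNum σ < d := by
  rw [descNum_eq_wcnt]
  have h1 : wcnt d σ d ≤ d - 1 := by
    rw [← wcnt_sub_one d hd σ, wcnt]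
    calc ((Finset.range (d-1)).filter (PnatDesc d σ)).card
        ≤ (Finset.range (d-1)).card := Finset.card_filter_le _ _
      _ = d - 1 := Finset.card_range _
  omega

lemma eulerian_eq_zero (d i : ℕ) (hd : 0 < d) (hi : d ≤ i) : eulerian d i = 0 := by
  rw [eulerian_eq_card, Finset.card_eq_zero, Finset.eq_empty_iff_forall_notMem]
  intro σ hσ
  rw [Finset.mem_filter] at hσ
  have := descNum_lt d hd σ
  omega

lemma worpitzky (d : ℕ) (hd : 0 < d) (m : ℕ) :
    m ^ d = ∑ i ∈ Finset.range (d + 1),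
      eulerian d i * ((m - i) + (d - 1)).choose d := by
  have h1 : m ^ d = Fintype.card (Fin d → Fin m) := by
    rw [Fintype.card_fun, Fintype.card_fin, Fintype.card_fin]
  rw [h1, ← Finset.card_univ,
    Finset.card_eq_sum_card_fiberwise
      (f := fun f : Fin d → Fin m => Tuple.sort f)
      (t := (Finset.univ : Finset (Equiv.Perm (Fin d))))
      (fun f _ => Finset.mem_univ _)]
  rw [Finset.sum_congr rfl (fun σ _ => fiber_card d m hd σ)]
  have h2 := Finset.sum_fiberwise_of_maps_to
    (s := (Finset.univ : Finset (Equiv.Perm (Fin d))))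
    (t := Finset.range (d + 1))
    (g := fun σ : Equiv.Perm (Fin d) => descNum σ)
    (fun σ _ => Finset.mem_range.2 (by show descNum σ < d + 1; have := descNum_lt d hd σ; omega))
    (fun σ : Equiv.Perm (Fin d) => ((m - descNum σ) + (d - 1)).choose d)
  rw [← h2]
  refine Finset.sum_congr rfl fun i _ => ?_
  rw [eulerian_eq_card]
  calc ∑ σ ∈ Finset.univ.filter (fun σ : Equiv.Perm (Fin d) => descNum σ = i),
        ((m - descNum σ) + (d - 1)).choose d
      = ∑ σ ∈ Finset.univ.filter (fun σ : Equiv.Perm (Fin d) => descNum σ = i),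
        ((m - i) + (d - 1)).choose d := by
        refine Finset.sum_congr rfl fun σ hσ => ?_
        rw [Finset.mem_filter] at hσ
        rw [hσ.2]
    _ = _ := by rw [Finset.sum_const, smul_eq_mul]

lemma worpitzky_ps (d : ℕ) (hd : 0 < d) :
    (PowerSeries.mk (fun r => ((r : ℚ)) ^ d))
      = (∑ i ∈ Finset.range (d + 1),
          PowerSeries.C ((eulerian d i : ℚ)) * PowerSeries.X ^ (i + 1))
        * (PowerSeries.invOneSubPow ℚ (d + 1)).val := by
  ext m
  rw [PowerSeries.coeff_mk, Finset.sum_mul, map_sum]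
  have hterm : ∀ i ∈ Finset.range (d + 1),
      PowerSeries.coeff m (PowerSeries.C ((eulerian d i : ℚ)) * PowerSeries.X ^ (i + 1)
        * (PowerSeries.invOneSubPow ℚ (d + 1)).val)
      = (eulerian d i : ℚ) * (((m - i) + (d - 1)).choose d : ℚ) := by
    intro i _
    rw [mul_assoc, PowerSeries.coeff_C_mul, coeff_X_pow_mul_inv]
    congr 1
    by_cases h : i + 1 ≤ m
    · rw [if_pos h]
      congr 2
      omega
    · rw [if_neg h]
      have h1 : m - i = 0 := by omega
      rw [h1, zero_add, eq_comm]
      norm_cast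
      exact Nat.choose_eq_zero_of_lt (by omega)
  rw [Finset.sum_congr rfl hterm]
  have hcast : ((m : ℚ)) ^ d = ∑ i ∈ Finset.range (d + 1),
      (eulerian d i : ℚ) * (((m - i) + (d - 1)).choose d : ℚ) := by
    have h := worpitzky d hd m
    have h2 : ((m ^ d : ℕ) : ℚ) = ((∑ i ∈ Finset.range (d + 1),
        eulerian d i * ((m - i) + (d - 1)).choose d : ℕ) : ℚ) := by rw [h]
    push_cast at h2
    exact h2
  exact hcast

lemma key_identity (n k : ℕ) (c : Fin n → ℕ) (hn : 2 ≤ n)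
    (hk0 : 0 < k) (hk : k < ∑ i, c i) :
    ∑ S ∈ (Finset.univ : Finset (Fin n)).powerset.filter
        (fun S => ∑ i ∈ S, c i < k),
      (-1 : ℚ) ^ S.card * ((k : ℚ) - (∑ i ∈ S, c i)) ^ (n - 1)
    = ∑ ℓ ∈ Finset.range k, (ballCount n c ℓ : ℚ) * (eulerian (n - 1) (k - ℓ - 1) : ℚ) := by
  obtain ⟨d, rfl⟩ : ∃ d, n = d + 1 := ⟨n - 1, by omega⟩
  have hd : 0 < d := by omega
  simp only [Nat.add_sub_cancel]
  set F : PowerSeries ℚ := PowerSeries.mk (fun r => ((r : ℚ)) ^ d) with hF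
  set E : PowerSeries ℚ := ∑ i ∈ Finset.range (d + 1),
      PowerSeries.C ((eulerian d i : ℚ)) * PowerSeries.X ^ (i + 1) with hE
  -- Step B : the two power series are equal
  have hunit : (PowerSeries.invOneSubPow ℚ (d+1)).val
      * ((1 - PowerSeries.X : PowerSeries ℚ)) ^ (d + 1) = 1 := by
    rw [← PowerSeries.invOneSubPow_inv_eq_one_sub_pow]
    exact (PowerSeries.invOneSubPow ℚ (d+1)).val_inv
  have hBpow : ((1 - PowerSeries.X : PowerSeries ℚ)) ^ (d + 1) * F = E := by
    rw [hF, worpitzky_ps d hd]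
    calc ((1 - PowerSeries.X : PowerSeries ℚ)) ^ (d + 1) * ((∑ i ∈ Finset.range (d + 1),
          PowerSeries.C ((eulerian d i : ℚ)) * PowerSeries.X ^ (i + 1))
        * (PowerSeries.invOneSubPow ℚ (d + 1)).val)
        = (∑ i ∈ Finset.range (d + 1),
          PowerSeries.C ((eulerian d i : ℚ)) * PowerSeries.X ^ (i + 1)) *
          ((PowerSeries.invOneSubPow ℚ (d+1)).val
            * ((1 - PowerSeries.X : PowerSeries ℚ)) ^ (d + 1)) := by ring
      _ = E := by rw [hunit, mul_one, hE]
  have hmain : (∑ S ∈ (Finset.univ : Finset (Fin (d+1))).powerset,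
        (-1 : PowerSeries ℚ) ^ S.card * PowerSeries.X ^ (∑ i ∈ S, c i)) * F
      = (∏ i, geomPS (c i)) * E := by
    rw [← prod_one_sub_X_pow, ← prod_geomPS_mul_pow, mul_assoc, hBpow]
  -- Step A : coefficient of LHS
  have hA : PowerSeries.coeff k ((∑ S ∈ (Finset.univ : Finset (Fin (d+1))).powerset,
        (-1 : PowerSeries ℚ) ^ S.card * PowerSeries.X ^ (∑ i ∈ S, c i)) * F)
      = ∑ S ∈ (Finset.univ : Finset (Fin (d+1))).powerset.filter
          (fun S => ∑ i ∈ S, c i < k),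
        (-1 : ℚ) ^ S.card * ((k : ℚ) - (∑ i ∈ S, c i)) ^ d := by
    rw [Finset.sum_mul, map_sum]
    have hterm : ∀ S ∈ (Finset.univ : Finset (Fin (d+1))).powerset,
        PowerSeries.coeff k ((-1 : PowerSeries ℚ) ^ S.card
            * PowerSeries.X ^ (∑ i ∈ S, c i) * F)
        = (-1 : ℚ) ^ S.card *
            (if (∑ i ∈ S, c i) ≤ k then (((k - (∑ i ∈ S, c i) : ℕ)) : ℚ) ^ d else 0) := by
      intro S _
      have e1 : (-1 : PowerSeries ℚ) ^ S.card * PowerSeries.X ^ (∑ i ∈ S, c i) * F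
          = PowerSeries.C ((-1 : ℚ) ^ S.card) * (F * PowerSeries.X ^ (∑ i ∈ S, c i)) := by
        rw [map_pow, map_neg, map_one]; ring
      rw [e1, PowerSeries.coeff_C_mul, PowerSeries.coeff_mul_X_pow']
      congr 1
      split_ifs with h
      · rw [hF, PowerSeries.coeff_mk]
      · rfl
    rw [Finset.sum_congr rfl hterm, Finset.sum_filter]
    refine Finset.sum_congr rfl fun S _ => ?_
    by_cases h : ∑ i ∈ S, c i < k
    · rw [if_pos h, if_pos (le_of_lt h), Nat.cast_sub (le_of_lt h)]
    · rw [if_neg h]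
      by_cases h2 : ∑ i ∈ S, c i ≤ k
      · rw [if_pos h2]
        have : k - (∑ i ∈ S, c i) = 0 := by omega
        rw [this]
        simp [zero_pow (by omega : d ≠ 0)]
      · rw [if_neg h2, mul_zero]
  -- Step C : coefficient of RHS
  have hC : PowerSeries.coeff k ((∏ i, geomPS (c i)) * E)
      = ∑ i ∈ Finset.range (d + 1), (eulerian d i : ℚ)
          * (if i + 1 ≤ k then (ballCount (d+1) c (k - i - 1) : ℚ) else 0) := by
    rw [hE, Finset.mul_sum, map_sum]
    refine Finset.sum_congr rfl fun i _ => ?_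
    have e1 : (∏ j, geomPS (c j)) * (PowerSeries.C ((eulerian d i : ℚ)) * PowerSeries.X ^ (i + 1))
        = PowerSeries.C ((eulerian d i : ℚ)) * ((∏ j, geomPS (c j)) * PowerSeries.X ^ (i + 1)) := by
      ring
    rw [e1, PowerSeries.coeff_C_mul, PowerSeries.coeff_mul_X_pow']
    congr 1
    split_ifs with h
    · rw [show k - (i + 1) = k - i - 1 from by omega, coeff_prod_geomPS]
      rfl
    · rfl
  -- Step D : reindex
  have hD : ∑ i ∈ Finset.range (d + 1), (eulerian d i : ℚ)
          * (if i + 1 ≤ k then (ballCount (d+1) c (k - i - 1) : ℚ) else 0)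
      = ∑ ℓ ∈ Finset.range k, (ballCount (d+1) c ℓ : ℚ) * (eulerian d (k - ℓ - 1) : ℚ) := by
    have e1 : ∀ i ∈ Finset.range (d + 1), (eulerian d i : ℚ)
          * (if i + 1 ≤ k then (ballCount (d+1) c (k - i - 1) : ℚ) else 0)
        = if i + 1 ≤ k then (eulerian d i : ℚ) * (ballCount (d+1) c (k - i - 1) : ℚ) else 0 := by
      intro i _
      split_ifs <;> simp
    rw [Finset.sum_congr rfl e1, ← Finset.sum_filter]
    have e2 : ∑ ℓ ∈ Finset.range k, (ballCount (d+1) c ℓ : ℚ) * (eulerian d (k - ℓ - 1) : ℚ)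
        = ∑ ℓ ∈ (Finset.range k).filter (fun ℓ => k - ℓ - 1 ≤ d),
            (ballCount (d+1) c ℓ : ℚ) * (eulerian d (k - ℓ - 1) : ℚ) := by
      rw [eq_comm]
      apply Finset.sum_filter_of_ne
      intro ℓ _ hne
      by_contra hcon
      push_neg at hcon
      rw [eulerian_eq_zero d (k - ℓ - 1) hd (by omega)] at hne
      simp at hne
    rw [e2]
    apply Finset.sum_nbij' (fun i => k - i - 1) (fun ℓ => k - ℓ - 1)
    · intro i hi
      simp only [Finset.mem_filter, Finset.mem_range] at hi ⊢
      omega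
    · intro ℓ hℓ
      simp only [Finset.mem_filter, Finset.mem_range] at hℓ ⊢
      omega
    · intro i hi
      simp only [Finset.mem_filter, Finset.mem_range] at hi
      omega
    · intro ℓ hℓ
      simp only [Finset.mem_filter, Finset.mem_range] at hℓ
      omega
    · intro i hi
      simp only [Finset.mem_filter, Finset.mem_range] at hi
      have : k - (k - i - 1) - 1 = i := by omega
      rw [this, mul_comm]
  rw [← hA, hmain, hC, hD]

theorem stmt15 (n k : ℕ) (c : Fin n → ℕ) (hc : ∀ i, 0 < c i)
    (hk0 : 0 < k) (hk : k < ∑ i, c i)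
    (p : Polynomial ℚ) (hp : ∀ t : ℕ, 0 < t → p.eval (t : ℚ) = sliceCount n c k t) :
    p.coeff (n - 1) = (1 / ((n - 1).factorial : ℚ)) *
      ∑ ℓ ∈ Finset.range k, (ballCount n c ℓ : ℚ) * (eulerian (n - 1) (k - ℓ - 1) : ℚ) := by
  rcases Nat.lt_or_ge n 2 with hn1 | hn2
  · -- n = 1
    have hn : n = 1 := by
      rcases Nat.eq_zero_or_pos n with rfl | h
      · rw [Finset.univ_eq_empty, Finset.sum_empty] at hk; omega
      · omega
    subst hn
    have hk1 : k ≤ c 0 - 1 ∧ k < c 0 := by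
      have : (∑ i : Fin 1, c i) = c 0 := Fin.sum_univ_one c
      rw [this] at hk
      omega
    -- sliceCount is constantly 1
    have hslice : ∀ t : ℕ, 0 < t → sliceCount 1 c k t = 1 := by
      intro t ht
      rw [sliceCount]
      have hset : ((Fintype.piFinset (fun i : Fin 1 => Finset.range (c i * t + 1))).filter
          (fun x => ∑ i, x i = k * t)) = {fun _ => k * t} := by
        ext x
        simp only [Finset.mem_filter, Fintype.mem_piFinset, Finset.mem_range,
          Fin.sum_univ_one, Finset.mem_singleton]
        constructor
        · rintro ⟨hx, hsum⟩
          funext i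
          have hi : i = 0 := Subsingleton.elim i 0
          rw [hi]; exact hsum
        · rintro rfl
          refine ⟨fun i => ?_, rfl⟩
          have hi : i = 0 := Subsingleton.elim i 0
          rw [hi]
          show k * t < c 0 * t + 1
          have : k * t ≤ c 0 * t := Nat.mul_le_mul_right t (le_of_lt hk1.2)
          omega
      rw [hset, Finset.card_singleton]
    -- p is the constant polynomial 1
    have hp1 : p = Polynomial.C 1 := by
      have hz : p - Polynomial.C 1 = 0 := by
        apply Polynomial.eq_zero_of_infinite_isRoot
        apply Set.infinite_of_injective_forall_mem (f := fun s : ℕ => ((s + 1 : ℕ) : ℚ))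
        · intro a b hab
          have : (a + 1 : ℕ) = (b + 1 : ℕ) := Nat.cast_injective hab
          omega
        · intro s
          simp only [Set.mem_setOf_eq, Polynomial.IsRoot, Polynomial.eval_sub,
            Polynomial.eval_C]
          rw [hp (s + 1) (by omega), hslice (s + 1) (by omega)]
          norm_num
      have := sub_eq_zero.1 hz
      exact this
    rw [hp1, Polynomial.coeff_C]
    simp only [Nat.sub_self, if_pos rfl]
    -- compute the RHS
    have heu : ∀ j : ℕ, eulerian 0 j = if j = 0 then 1 else 0 := by
      intro j
      rw [eulerian_eq_card]
      have hds : ∀ σ : Equiv.Perm (Fin 0), descNum σ = 0 := by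
        intro σ
        rw [descNum]
        simp
      by_cases hj : j = 0
      · subst hj
        rw [if_pos rfl]
        rw [Finset.filter_true_of_mem (fun σ _ => hds σ)]
        rw [Finset.card_univ]
        simp
      · rw [if_neg hj]
        rw [Finset.filter_false_of_mem (fun σ _ => by rw [hds σ]; omega)]
        rfl
    have hball : ballCount 1 c (k - 1) = 1 := by
      rw [ballCount]
      have hset : ((Fintype.piFinset (fun i : Fin 1 => Finset.range (c i))).filter
          (fun b => ∑ i, b i = k - 1)) = {fun _ => k - 1} := by
        ext x
        simp only [Finset.mem_filter, Fintype.mem_piFinset, Finset.mem_range,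
          Fin.sum_univ_one, Finset.mem_singleton]
        constructor
        · rintro ⟨hx, hsum⟩
          funext i
          have hi : i = 0 := Subsingleton.elim i 0
          rw [hi]; exact hsum
        · rintro rfl
          refine ⟨fun i => ?_, rfl⟩
          have hi : i = 0 := Subsingleton.elim i 0
          rw [hi]
          show k - 1 < c 0
          omega
      rw [hset, Finset.card_singleton]
    have hsum : ∑ ℓ ∈ Finset.range k, (ballCount 1 c ℓ : ℚ) * (eulerian 0 (k - ℓ - 1) : ℚ)
        = 1 := by
      have hterm : ∀ ℓ ∈ Finset.range k,
          (ballCount 1 c ℓ : ℚ) * (eulerian 0 (k - ℓ - 1) : ℚ)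
          = if ℓ = k - 1 then 1 else 0 := by
        intro ℓ hℓ
        rw [Finset.mem_range] at hℓ
        rw [heu]
        by_cases h : ℓ = k - 1
        · rw [if_pos h, if_pos (by omega), h, hball]
          norm_num
        · rw [if_neg (by omega : ¬ (k - ℓ - 1 = 0)), if_neg h]
          norm_num
      rw [Finset.sum_congr rfl hterm, Finset.sum_ite_eq' (Finset.range k) (k-1) (fun _ => (1:ℚ))]
      rw [if_pos (Finset.mem_range.2 (by omega))]
    rw [hsum]
    norm_num
  · -- n ≥ 2
    have hq : p = qpoly n k c := by
      have hz : p - qpoly n k c = 0 := by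
        apply Polynomial.eq_zero_of_infinite_isRoot
        apply Set.infinite_of_injective_forall_mem (f := fun s : ℕ => ((s + n : ℕ) : ℚ))
        · intro a b hab
          have : (a + n : ℕ) = (b + n : ℕ) := Nat.cast_injective hab
          omega
        · intro s
          simp only [Set.mem_setOf_eq, Polynomial.IsRoot, Polynomial.eval_sub]
          rw [hp (s + n) (by omega),
            qpoly_eval n k c hc (by omega) hk0 hk (s + n) (by omega)]
          ring
      exact sub_eq_zero.1 hz
    rw [hq, qpoly_coeff, key_identity n k c hn2 hk0 hk, one_div]
end
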